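/- arXiv:1804.04029 — 6 statements merged into one kernel-verified Lean document; each statement's English description precedes it below -/
import Mathlib

section
/- Let n, m be positive integers, let Γ ∈ ℝ^{(n+m)×(n+m)} be written in block form Γ = [[Γ₁₁, Γ₁₂],[Γ₂₁, Γ₂₂]] with Γ₁₁ ∈ ℝ^{n×n}, Γ₁₂ ∈ ℝ^{n×m}, Γ₂₁ ∈ ℝ^{m×n}, Γ₂₂ ∈ ℝ^{m×m}, and suppose Γ₁₁ = 0. Let Q ∈ ℝ^{m×m} be symmetric positive definite and set D = [[Iₙ, 0],[0, Q]] ∈ ℝ^{(n+m)×(n+m)}. If the matrix Γ·D + D·Γᵀ is positive semidefinite, then Γ₁₂·Q = −Γ₂₁ᵀ. -/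
open Matrix

lemma aux {ι : Type*} [Fintype ι] [DecidableEq ι] {M : Matrix ι ι ℝ}
    (h : M.PosSemidef) {i : ι} (hi : M i i = 0) (j : ι) : M i j = 0 := by
  rcases eq_or_ne i j with rfl | hij
  · exact hi
  have hsym : M j i = M i j := by
    have := h.1
    rw [IsHermitian] at this
    conv_lhs => rw [← this]
    simp [conjTranspose_apply]
  have key : ∀ t : ℝ, 0 ≤ 2 * t * M i j + M j j := by
    intro t
    have h2 := h.dotProduct_mulVec_nonneg (t • (Pi.single i 1 : ι → ℝ) + (Pi.single j 1 : ι → ℝ))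
    simp only [star_trivial, dotProduct_add, add_dotProduct, smul_dotProduct,
      mulVec_add, mulVec_smul, mulVec_single, dotProduct_smul,
      single_dotProduct, dotProduct_single, smul_eq_mul, mul_one,
      Pi.smul_apply] at h2
    simp [Pi.single_apply, hij, hij.symm, hi, hsym] at h2
    linarith
  by_contra hb
  have h1 := key (-(M j j + 1) / (2 * M i j))
  have h2 : 2 * (-(M j j + 1) / (2 * M i j)) * M i j = -(M j j + 1) := by
    field_simp
  linarith

/-- For a quasi-Markovian GLE without white-noise component (`Γ₁₁ = 0`), positive
semidefiniteness of `Γ·D + D·Γᵀ` with `D = diag(Iₙ, Q)` forces `Γ₁₂·Q = −Γ₂₁ᵀ`. -/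
theorem stmt0 {n m : ℕ} (hn : 0 < n) (hm : 0 < m)
    (Γ11 : Matrix (Fin n) (Fin n) ℝ) (Γ12 : Matrix (Fin n) (Fin m) ℝ)
    (Γ21 : Matrix (Fin m) (Fin n) ℝ) (Γ22 : Matrix (Fin m) (Fin m) ℝ)
    (hΓ11 : Γ11 = 0)
    (Q : Matrix (Fin m) (Fin m) ℝ) (hQ : Q.PosDef)
    (Γ : Matrix (Fin n ⊕ Fin m) (Fin n ⊕ Fin m) ℝ)
    (hΓ : Γ = Matrix.fromBlocks Γ11 Γ12 Γ21 Γ22)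
    (D : Matrix (Fin n ⊕ Fin m) (Fin n ⊕ Fin m) ℝ)
    (hD : D = Matrix.fromBlocks 1 0 0 Q)
    (hpsd : (Γ * D + D * Γᵀ).PosSemidef) :
    Γ12 * Q = -Γ21ᵀ := by
  have hM : Γ * D + D * Γᵀ =
      fromBlocks 0 (Γ12 * Q + Γ21ᵀ) (Γ21 + Q * Γ12ᵀ) (Γ22 * Q + Q * Γ22ᵀ) := by
    subst hΓ hD hΓ11
    simp [fromBlocks_transpose, fromBlocks_multiply, fromBlocks_add]
  rw [hM] at hpsd
  ext i j
  have hdiag : (fromBlocks 0 (Γ12 * Q + Γ21ᵀ) (Γ21 + Q * Γ12ᵀ) (Γ22 * Q + Q * Γ22ᵀ))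
      (Sum.inl i) (Sum.inl i) = 0 := by simp [fromBlocks_apply₁₁]
  have hz := aux hpsd hdiag (Sum.inr j)
  simp only [fromBlocks_apply₁₂, Matrix.add_apply] at hz
  simp only [Matrix.neg_apply]
  linarith
end

section
/- Let n, m be positive integers, β > 0, M ∈ ℝ^{n×n} symmetric positive definite, U : ℝⁿ → ℝ twice continuously differentiable, and let Γ : ℝⁿ → ℝ^{(n+m)×(n+m)} and Σ : ℝⁿ → ℝ^{(n+m)×(n+m)} be continuously differentiable matrix-valued maps, with blocks Γ₁₁(q) ∈ ℝ^{n×n}, Γ₁₂(q) ∈ ℝ^{n×m}, Γ₂₁(q) ∈ ℝ^{m×n}, Γ₂₂(q) ∈ ℝ^{m×m}. Suppose there is a symmetric positive definite Q ∈ ℝ^{m×m} such that for every q ∈ ℝⁿ: Γ(q)·diag(Iₙ, Q) + diag(Iₙ, Q)·Γ(q)ᵀ = Σ(q)Σ(q)ᵀ. Define ρ(q,p,s) = exp(−β(U(q) + ½ pᵀM⁻¹p + ½ sᵀQ⁻¹s)). Then ρ satisfies the stationary Fokker–Planck equation of the quasi-Markovian generalized Langevin equation pointwise: for all (q,p,s)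 ∈ ℝⁿ×ℝⁿ×ℝᵐ, ⟨M⁻¹p, ∇_q ρ⟩ + div_p[(−∇U(q) − Γ₁₁(q)M⁻¹p − Γ₁₂(q)s)·ρ] + div_s[(−Γ₂₁(q)M⁻¹p − Γ₂₂(q)s)·ρ] = (1/(2β)) ∑_{i,j=1}^{n+m} (Σ(q)Σ(q)ᵀ)_{ij} ∂²ρ/∂z_i∂z_j, where z = (p,s) ∈ ℝ^{n+m} and div_p, div_s denote the divergence in the p- and s-variables respectively. -/
open Matrix

/-- The coordinate direction in the `q`-variable. -/
noncomputable def eQ (n m : ℕ) (i : Fin n) : (Fin n → ℝ) × (Fin n → ℝ) × (Fin m → ℝ) :=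
  (Pi.single i 1, 0, 0)

/-- The coordinate direction in the `p`-variable. -/
noncomputable def eP (n m : ℕ) (i : Fin n) : (Fin n → ℝ) × (Fin n → ℝ) × (Fin m → ℝ) :=
  (0, Pi.single i 1, 0)

/-- The coordinate direction in the `s`-variable. -/
noncomputable def eS (n m : ℕ) (j : Fin m) : (Fin n → ℝ) × (Fin n → ℝ) × (Fin m → ℝ) :=
  (0, 0, Pi.single j 1)

/-- The coordinate direction in the `z = (p,s)`-variable. -/
noncomputable def eZ (n m : ℕ) : Fin (n + m) → (Fin n → ℝ) × (Fin n → ℝ) × (Fin m → ℝ) :=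
  Fin.addCases (eP n m) (eS n m)

/-- The Gibbs-type density `ρ(q,p,s) = exp(−β(U(q) + ½ pᵀM⁻¹p + ½ sᵀQ⁻¹s))`. -/
noncomputable def gleDensity {n m : ℕ} (β : ℝ) (U : (Fin n → ℝ) → ℝ)
    (M : Matrix (Fin n) (Fin n) ℝ) (Q : Matrix (Fin m) (Fin m) ℝ)
    (x : (Fin n → ℝ) × (Fin n → ℝ) × (Fin m → ℝ)) : ℝ :=
  Real.exp (-β * (U x.1 + (1 / 2) * (x.2.1 ⬝ᵥ M⁻¹.mulVec x.2.1)
    + (1 / 2) * (x.2.2 ⬝ᵥ Q⁻¹.mulVec x.2.2)))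





noncomputable def dotCLM {k : ℕ} (c : Fin k → ℝ) : (Fin k → ℝ) →L[ℝ] ℝ :=
  ∑ i, c i • (ContinuousLinearMap.proj i : (Fin k → ℝ) →L[ℝ] ℝ)

@[simp] lemma dotCLM_apply {k : ℕ} (c v : Fin k → ℝ) : dotCLM c v = c ⬝ᵥ v := by
  simp [dotCLM, dotProduct, ContinuousLinearMap.sum_apply]

lemma hasFDerivAt_quad {k : ℕ} (A : Matrix (Fin k) (Fin k) ℝ) (p : Fin k → ℝ) :
    HasFDerivAt (fun q : Fin k → ℝ => q ⬝ᵥ A *ᵥ q) (dotCLM (A *ᵥ p + Aᵀ *ᵥ p)) p := by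
  have H := HasFDerivAt.sum (fun i (_ : i ∈ Finset.univ) =>
    ((ContinuousLinearMap.proj i : (Fin k → ℝ) →L[ℝ] ℝ).hasFDerivAt (x := p)).mul
      ((dotCLM (A i)).hasFDerivAt (x := p)))
  have hfun : (fun q : Fin k → ℝ => q ⬝ᵥ A *ᵥ q) =
      fun q => ∑ i, (ContinuousLinearMap.proj i : (Fin k → ℝ) →L[ℝ] ℝ) q * dotCLM (A i) q := by
    funext q
    simp [dotProduct, mulVec]
  rw [hfun]
  convert H using 1
  case e'_4 => rfl
  case e'_5 => rfl
  case e'_6 => rfl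
  case e'_8 => rfl
  case e'_9 => rfl
  case e'_11 => funext q; simp [Finset.sum_apply]
  ext v
  simp [dotCLM, ContinuousLinearMap.sum_apply, dotProduct, mulVec, transpose,
    Finset.sum_add_distrib, add_mul, Finset.sum_mul, Finset.mul_sum]
  rw [Finset.sum_comm]
  rw [add_comm]
  congr 1
  rw [Finset.sum_comm]
  exact Finset.sum_congr rfl fun i _ => Finset.sum_congr rfl fun j _ => by ring

abbrev EE (n m : ℕ) := (Fin n → ℝ) × (Fin n → ℝ) × (Fin m → ℝ)

noncomputable def pCLM (n m : ℕ) : EE n m →L[ℝ] (Fin n → ℝ) :=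
  (ContinuousLinearMap.fst ℝ (Fin n → ℝ) (Fin m → ℝ)).comp
    (ContinuousLinearMap.snd ℝ (Fin n → ℝ) ((Fin n → ℝ) × (Fin m → ℝ)))

noncomputable def sCLM (n m : ℕ) : EE n m →L[ℝ] (Fin m → ℝ) :=
  (ContinuousLinearMap.snd ℝ (Fin n → ℝ) (Fin m → ℝ)).comp
    (ContinuousLinearMap.snd ℝ (Fin n → ℝ) ((Fin n → ℝ) × (Fin m → ℝ)))

@[simp] lemma pCLM_apply {n m : ℕ} (v : EE n m) : pCLM n m v = v.2.1 := rfl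
@[simp] lemma sCLM_apply {n m : ℕ} (v : EE n m) : sCLM n m v = v.2.2 := rfl

section helpers
variable {n m : ℕ} (β : ℝ) (U : (Fin n → ℝ) → ℝ)
  (M : Matrix (Fin n) (Fin n) ℝ) (Q : Matrix (Fin m) (Fin m) ℝ)

lemma gle_hasFDerivAt (hMs : M⁻¹ᵀ = M⁻¹) (hQs : Q⁻¹ᵀ = Q⁻¹)
    (x : EE n m) (hUx : DifferentiableAt ℝ U x.1) :
    HasFDerivAt (gleDensity β U M Q)
      ((-β * gleDensity β U M Q x) •
        ((fderiv ℝ U x.1).comp (ContinuousLinearMap.fst ℝ (Fin n → ℝ) ((Fin n → ℝ) × (Fin m → ℝ)))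
          + (dotCLM (M⁻¹ *ᵥ x.2.1)).comp (pCLM n m)
          + (dotCLM (Q⁻¹ *ᵥ x.2.2)).comp (sCLM n m))) x := by
  have h1 : HasFDerivAt (fun y : EE n m => U y.1)
      ((fderiv ℝ U x.1).comp (ContinuousLinearMap.fst ℝ _ _)) x :=
    hUx.hasFDerivAt.comp x (hasFDerivAt_fst)
  have hp : HasFDerivAt (fun y : EE n m => y.2.1) (pCLM n m) x := (pCLM n m).hasFDerivAt
  have hs : HasFDerivAt (fun y : EE n m => y.2.2) (sCLM n m) x := (sCLM n m).hasFDerivAt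
  have h2 : HasFDerivAt (fun y : EE n m => y.2.1 ⬝ᵥ M⁻¹ *ᵥ y.2.1)
      ((dotCLM (M⁻¹ *ᵥ x.2.1 + M⁻¹ᵀ *ᵥ x.2.1)).comp (pCLM n m)) x :=
    HasFDerivAt.comp (g := fun q : Fin n → ℝ => q ⬝ᵥ M⁻¹ *ᵥ q) x (hasFDerivAt_quad M⁻¹ x.2.1) hp
  have h3 : HasFDerivAt (fun y : EE n m => y.2.2 ⬝ᵥ Q⁻¹ *ᵥ y.2.2)
      ((dotCLM (Q⁻¹ *ᵥ x.2.2 + Q⁻¹ᵀ *ᵥ x.2.2)).comp (sCLM n m)) x :=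
    HasFDerivAt.comp (g := fun q : Fin m → ℝ => q ⬝ᵥ Q⁻¹ *ᵥ q) x (hasFDerivAt_quad Q⁻¹ x.2.2) hs
  have hg : HasFDerivAt
      (fun y : EE n m => -β * (U y.1 + (1/2) * (y.2.1 ⬝ᵥ M⁻¹ *ᵥ y.2.1)
        + (1/2) * (y.2.2 ⬝ᵥ Q⁻¹ *ᵥ y.2.2)))
      ((-β) • (((fderiv ℝ U x.1).comp (ContinuousLinearMap.fst ℝ _ _)
        + (1/2 : ℝ) • ((dotCLM (M⁻¹ *ᵥ x.2.1 + M⁻¹ᵀ *ᵥ x.2.1)).comp (pCLM n m)))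
        + (1/2 : ℝ) • ((dotCLM (Q⁻¹ *ᵥ x.2.2 + Q⁻¹ᵀ *ᵥ x.2.2)).comp (sCLM n m)))) x :=
    ((h1.add (h2.const_mul (1/2))).add (h3.const_mul (1/2))).const_mul (-β)
  have := hg.exp
  refine this.congr_fderiv ?_
  · refine ContinuousLinearMap.ext fun v => ?_
    have e1 : M⁻¹ᵀ *ᵥ x.2.1 = M⁻¹ *ᵥ x.2.1 := by rw [hMs]
    have e2 : Q⁻¹ᵀ *ᵥ x.2.2 = Q⁻¹ *ᵥ x.2.2 := by rw [hQs]
    simp [gleDensity, e1, e2, add_dotProduct, ContinuousLinearMap.add_apply]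
    ring

lemma gle_fderiv_apply (hMs : M⁻¹ᵀ = M⁻¹) (hQs : Q⁻¹ᵀ = Q⁻¹)
    (x : EE n m) (hUx : DifferentiableAt ℝ U x.1) (v : EE n m) :
    fderiv ℝ (gleDensity β U M Q) x v =
      -β * gleDensity β U M Q x *
        (fderiv ℝ U x.1 v.1 + (M⁻¹ *ᵥ x.2.1) ⬝ᵥ v.2.1 + (Q⁻¹ *ᵥ x.2.2) ⬝ᵥ v.2.2) := by
  rw [(gle_hasFDerivAt β U M Q hMs hQs x hUx).fderiv]
  simp [ContinuousLinearMap.add_apply]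
  ring

lemma hasFDerivAt_comp_fst {g : (Fin n → ℝ) → ℝ} {x : EE n m} (hg : DifferentiableAt ℝ g x.1) :
    HasFDerivAt (fun y : EE n m => g y.1)
      ((fderiv ℝ g x.1).comp (ContinuousLinearMap.fst ℝ (Fin n → ℝ) ((Fin n → ℝ) × (Fin m → ℝ)))) x :=
  hg.hasFDerivAt.comp x hasFDerivAt_fst

lemma hasFDerivAt_pA {j : ℕ} (A : Matrix (Fin j) (Fin n) ℝ) (k : Fin j) (x : EE n m) :
    HasFDerivAt (fun y : EE n m => (A *ᵥ y.2.1) k) ((dotCLM (A k)).comp (pCLM n m)) x :=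
  (((dotCLM (A k)).comp (pCLM n m)).hasFDerivAt (x := x)).congr_of_eventuallyEq
    (Filter.Eventually.of_forall fun y => by simp [Matrix.mulVec])

lemma hasFDerivAt_sA {j : ℕ} (A : Matrix (Fin j) (Fin m) ℝ) (k : Fin j) (x : EE n m) :
    HasFDerivAt (fun y : EE n m => (A *ᵥ y.2.2) k) ((dotCLM (A k)).comp (sCLM n m)) x :=
  (((dotCLM (A k)).comp (sCLM n m)).hasFDerivAt (x := x)).congr_of_eventuallyEq
    (Filter.Eventually.of_forall fun y => by simp [Matrix.mulVec])

lemma hasFDerivAt_scoord (k : Fin m) (x : EE n m) :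
    HasFDerivAt (fun y : EE n m => y.2.2 k)
      ((ContinuousLinearMap.proj k).comp (sCLM n m)) x :=
  (((ContinuousLinearMap.proj k).comp (sCLM n m)).hasFDerivAt (x := x)).congr_of_eventuallyEq
    (Filter.Eventually.of_forall fun y => by simp)

end helpers



lemma sum2_congr {a b : ℕ} {f g : Fin a → Fin b → ℝ} (h : ∀ i k, f i k = g i k) :
    ∑ i, ∑ k, f i k = ∑ i, ∑ k, g i k :=
  Finset.sum_congr rfl fun i _ => Finset.sum_congr rfl fun k _ => h i k

lemma pull_right {b : ℕ} (c : ℝ) (f : Fin b → ℝ) : ∑ k, f k * c = (∑ k, f k) * c :=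
  (Finset.sum_mul ..).symm

lemma gle_final_algebra {n m : ℕ} {β ρ : ℝ} (hβ : β ≠ 0)
    (u dU : Fin n → ℝ) (w s : Fin m → ℝ)
    (G11 : Matrix (Fin n) (Fin n) ℝ) (G12 : Matrix (Fin n) (Fin m) ℝ)
    (G21 : Matrix (Fin m) (Fin n) ℝ) (G22 : Matrix (Fin m) (Fin m) ℝ)
    (Q Qinv : Matrix (Fin m) (Fin m) ℝ) (Minv : Matrix (Fin n) (Fin n) ℝ)
    (hMsym : ∀ a b, Minv a b = Minv b a)
    (hQsym : ∀ a b, Q a b = Q b a)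
    (hQr : ∀ a b, (∑ l, Q a l * Qinv l b) = if a = b then 1 else 0)
    (hQl : ∀ a b, (∑ l, Qinv a l * Q l b) = if a = b then 1 else 0)
    (hs : ∀ r, (∑ l, Q r l * w l) = s r) :
    (∑ i, u i * (-β * ρ * dU i))
      + (∑ i, ((-∑ k, G11 i k * Minv k i) * ρ
          + (-dU i - ∑ k, G11 i k * u k - ∑ k, G12 i k * s k) * (-β * ρ * u i)))
      + (∑ j, (-G22 j j * ρ
          + (-∑ k, G21 j k * u k - ∑ k, G22 j k * s k) * (-β * ρ * w j)))
    = 1 / (2*β) *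
      ((∑ i, ((∑ k, (G11 i k + G11 k i) * (ρ * (β^2 * u i * u k) - β * ρ * Minv k i))
          + (∑ k, ((∑ j, G12 i j * Q j k) + G21 k i) * (ρ * (β^2 * u i * w k)))))
        + (∑ j, ((∑ k, (G21 j k + ∑ r, Q j r * G12 k r) * (ρ * (β^2 * w j * u k)))
          + (∑ k, ((∑ r, G22 j r * Q r k) + (∑ r, Q j r * G22 k r))
              * (ρ * (β^2 * w j * w k) - β * ρ * Qinv k j))))) := by
  -- canonical quantities
  set TA := ∑ i, ∑ k, G11 i k * Minv k i with hTA
  set TB := ∑ j, G22 j j with hTB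
  set XUU := ∑ i, u i * ∑ k, G11 i k * u k with hXUU
  set XUS := ∑ i, u i * ∑ k, G12 i k * s k with hXUS
  set XWU := ∑ j, w j * ∑ k, G21 j k * u k with hXWU
  set XWS := ∑ j, w j * ∑ k, G22 j k * s k with hXWS
  set DU := ∑ i, u i * dU i with hDU
  -- LHS pieces
  have L1 : (∑ i, u i * (-β * ρ * dU i)) = -(β*ρ*DU) := by
    rw [hDU, Finset.mul_sum, ← Finset.sum_neg_distrib]
    exact Finset.sum_congr rfl fun i _ => by ring
  have L2 : (∑ i, ((-∑ k, G11 i k * Minv k i) * ρ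
        + (-dU i - ∑ k, G11 i k * u k - ∑ k, G12 i k * s k) * (-β * ρ * u i)))
      = -(ρ*TA) + β*ρ*DU + β*ρ*XUU + β*ρ*XUS := by
    rw [hTA, hDU, hXUU, hXUS, Finset.mul_sum, Finset.mul_sum, Finset.mul_sum, Finset.mul_sum,
      ← Finset.sum_neg_distrib, ← Finset.sum_add_distrib, ← Finset.sum_add_distrib,
      ← Finset.sum_add_distrib]
    exact Finset.sum_congr rfl fun i _ => by ring
  have L3 : (∑ j, (-G22 j j * ρ
        + (-∑ k, G21 j k * u k - ∑ k, G22 j k * s k) * (-β * ρ * w j)))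
      = -(ρ*TB) + β*ρ*XWU + β*ρ*XWS := by
    rw [hTB, hXWU, hXWS, Finset.mul_sum, Finset.mul_sum, Finset.mul_sum,
      ← Finset.sum_neg_distrib, ← Finset.sum_add_distrib, ← Finset.sum_add_distrib]
    exact Finset.sum_congr rfl fun j _ => by ring
  -- RHS block 11
  have B11 : (∑ i, ∑ k, (G11 i k + G11 k i) * (ρ * (β^2 * u i * u k) - β * ρ * Minv k i))
      = 2*β^2*ρ*XUU - 2*β*ρ*TA := by
    have e1 : ∀ (i k : Fin n), (G11 i k + G11 k i) * (ρ * (β^2 * u i * u k) - β * ρ * Minv k i)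
        = (G11 i k * (β^2*ρ*(u i * u k)) + G11 k i * (β^2*ρ*(u i * u k)))
          - (G11 i k * (β*ρ*Minv k i) + G11 k i * (β*ρ*Minv k i)) := fun i k => by ring
    rw [sum2_congr e1]
    simp only [Finset.sum_sub_distrib, Finset.sum_add_distrib]
    have s1 : ∑ i, ∑ k, G11 k i * (β^2*ρ*(u i * u k)) = ∑ i, ∑ k, G11 i k * (β^2*ρ*(u i * u k)) := by
      rw [Finset.sum_comm]
      exact sum2_congr fun i k => by ring
    have s2 : ∑ i, ∑ k, G11 k i * (β*ρ*Minv k i) = ∑ i, ∑ k, G11 i k * (β*ρ*Minv k i) := by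
      rw [Finset.sum_comm]
      exact sum2_congr fun i k => by rw [hMsym k i]
    have s3 : ∑ i, ∑ k, G11 i k * (β^2*ρ*(u i * u k)) = β^2*ρ*XUU := by
      rw [hXUU, Finset.mul_sum]
      exact Finset.sum_congr rfl fun i _ => by rw [Finset.mul_sum, Finset.mul_sum]; exact Finset.sum_congr rfl fun k _ => by ring
    have s4 : ∑ i, ∑ k, G11 i k * (β*ρ*Minv k i) = β*ρ*TA := by
      rw [hTA, Finset.mul_sum]
      exact Finset.sum_congr rfl fun i _ => by rw [Finset.mul_sum]; exact Finset.sum_congr rfl fun k _ => by ring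
    rw [s1, s2, s3, s4]; ring
  have B12 : (∑ i, ∑ k, ((∑ j, G12 i j * Q j k) + G21 k i) * (ρ * (β^2 * u i * w k)))
      = β^2*ρ*XUS + β^2*ρ*XWU := by
    have e1 : ∀ (i : Fin n) (k : Fin m), ((∑ j, G12 i j * Q j k) + G21 k i) * (ρ * (β^2 * u i * w k))
        = (∑ j, G12 i j * (Q j k * w k) * (ρ*β^2*u i)) + G21 k i * (ρ*(β^2*u i*w k)) := by
      intro i k
      rw [add_mul, Finset.sum_mul]
      congr 1
      exact Finset.sum_congr rfl fun j _ => by ring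
    rw [sum2_congr e1]
    simp only [Finset.sum_add_distrib]
    have P1 : ∑ i, ∑ k, ∑ j, G12 i j * (Q j k * w k) * (ρ*β^2*u i) = β^2*ρ*XUS := by
      rw [hXUS, Finset.mul_sum]
      refine Finset.sum_congr rfl fun i _ => ?_
      rw [Finset.sum_comm]
      calc ∑ j, ∑ k, G12 i j * (Q j k * w k) * (ρ*β^2*u i)
          = ∑ j, G12 i j * s j * (ρ*β^2*u i) := by
            refine Finset.sum_congr rfl fun j _ => ?_
            rw [pull_right, ← Finset.mul_sum, hs j]
        _ = (∑ j, G12 i j * s j) * (ρ*β^2*u i) := pull_right _ _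
        _ = β^2*ρ*(u i * ∑ k, G12 i k * s k) := by ring
    have P2 : ∑ i, ∑ k, G21 k i * (ρ*(β^2*u i*w k)) = β^2*ρ*XWU := by
      rw [hXWU, Finset.mul_sum, Finset.sum_comm]
      refine Finset.sum_congr rfl fun k _ => ?_
      calc ∑ i, G21 k i * (ρ*(β^2*u i*w k))
          = ∑ i, G21 k i * u i * (ρ*β^2*w k) := Finset.sum_congr rfl fun i _ => by ring
        _ = (∑ i, G21 k i * u i) * (ρ*β^2*w k) := pull_right _ _
        _ = β^2*ρ*(w k * ∑ i, G21 k i * u i) := by ring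
    rw [P1, P2]
  have B21 : (∑ j, ∑ k, (G21 j k + ∑ r, Q j r * G12 k r) * (ρ * (β^2 * w j * u k)))
      = β^2*ρ*XWU + β^2*ρ*XUS := by
    have e1 : ∀ (j : Fin m) (k : Fin n), (G21 j k + ∑ r, Q j r * G12 k r) * (ρ * (β^2 * w j * u k))
        = G21 j k * (ρ*(β^2*w j*u k)) + (∑ r, G12 k r * (Q j r * w j) * (ρ*β^2*u k)) := by
      intro j k
      rw [add_mul, Finset.sum_mul]
      congr 1
      exact Finset.sum_congr rfl fun r _ => by ring
    rw [sum2_congr e1]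
    simp only [Finset.sum_add_distrib]
    have P1 : ∑ j, ∑ k, G21 j k * (ρ*(β^2*w j*u k)) = β^2*ρ*XWU := by
      rw [hXWU, Finset.mul_sum]
      refine Finset.sum_congr rfl fun j _ => ?_
      calc ∑ k, G21 j k * (ρ*(β^2*w j*u k))
          = ∑ k, G21 j k * u k * (ρ*β^2*w j) := Finset.sum_congr rfl fun k _ => by ring
        _ = (∑ k, G21 j k * u k) * (ρ*β^2*w j) := pull_right _ _
        _ = β^2*ρ*(w j * ∑ k, G21 j k * u k) := by ring
    have P2 : ∑ j, ∑ k, ∑ r, G12 k r * (Q j r * w j) * (ρ*β^2*u k) = β^2*ρ*XUS := by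
      rw [hXUS, Finset.mul_sum, Finset.sum_comm]
      refine Finset.sum_congr rfl fun k _ => ?_
      rw [Finset.sum_comm]
      calc ∑ r, ∑ j, G12 k r * (Q j r * w j) * (ρ*β^2*u k)
          = ∑ r, G12 k r * s r * (ρ*β^2*u k) := by
            refine Finset.sum_congr rfl fun r _ => ?_
            rw [pull_right, ← Finset.mul_sum]
            congr 2
            rw [show (∑ j, Q j r * w j) = ∑ j, Q r j * w j from
              Finset.sum_congr rfl fun j _ => by rw [hQsym j r], hs r]
        _ = (∑ r, G12 k r * s r) * (ρ*β^2*u k) := pull_right _ _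
        _ = β^2*ρ*(u k * ∑ r, G12 k r * s r) := by ring
    rw [P1, P2]
  have B22 : (∑ j, ∑ k, ((∑ r, G22 j r * Q r k) + (∑ r, Q j r * G22 k r))
        * (ρ * (β^2 * w j * w k) - β * ρ * Qinv k j))
      = 2*β^2*ρ*XWS - 2*β*ρ*TB := by
    have e1 : ∀ (j k : Fin m), ((∑ r, G22 j r * Q r k) + (∑ r, Q j r * G22 k r))
          * (ρ * (β^2 * w j * w k) - β * ρ * Qinv k j)
        = ((∑ r, G22 j r * (Q r k * w k) * (ρ*β^2*w j)) + (∑ r, G22 k r * (Q j r * w j) * (ρ*β^2*w k)))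
          - ((∑ r, G22 j r * (Q r k * Qinv k j) * (β*ρ)) + (∑ r, G22 k r * (Qinv k j * Q j r) * (β*ρ))) := by
      intro j k
      have ha : (∑ r, G22 j r * (Q r k * w k) * (ρ*β^2*w j))
          = (∑ r, G22 j r * Q r k) * (ρ * (β^2 * w j * w k)) := by
        rw [← pull_right]
        exact Finset.sum_congr rfl fun r _ => by ring
      have hb : (∑ r, G22 k r * (Q j r * w j) * (ρ*β^2*w k))
          = (∑ r, Q j r * G22 k r) * (ρ * (β^2 * w j * w k)) := by
        rw [← pull_right]
        exact Finset.sum_congr rfl fun r _ => by ring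
      have hc : (∑ r, G22 j r * (Q r k * Qinv k j) * (β*ρ))
          = (∑ r, G22 j r * Q r k) * (β * ρ * Qinv k j) := by
        rw [← pull_right]
        exact Finset.sum_congr rfl fun r _ => by ring
      have hd : (∑ r, G22 k r * (Qinv k j * Q j r) * (β*ρ))
          = (∑ r, Q j r * G22 k r) * (β * ρ * Qinv k j) := by
        rw [← pull_right]
        exact Finset.sum_congr rfl fun r _ => by ring
      rw [ha, hb, hc, hd]
      ring
    rw [sum2_congr e1]
    simp only [Finset.sum_sub_distrib, Finset.sum_add_distrib]
    have W1 : ∑ j, ∑ k, ∑ r, G22 j r * (Q r k * w k) * (ρ*β^2*w j) = β^2*ρ*XWS := by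
      rw [hXWS, Finset.mul_sum]
      refine Finset.sum_congr rfl fun j _ => ?_
      rw [Finset.sum_comm]
      calc ∑ r, ∑ k, G22 j r * (Q r k * w k) * (ρ*β^2*w j)
          = ∑ r, G22 j r * s r * (ρ*β^2*w j) := by
            refine Finset.sum_congr rfl fun r _ => ?_
            rw [pull_right, ← Finset.mul_sum, hs r]
        _ = (∑ r, G22 j r * s r) * (ρ*β^2*w j) := pull_right _ _
        _ = β^2*ρ*(w j * ∑ k, G22 j k * s k) := by ring
    have W2 : ∑ j, ∑ k, ∑ r, G22 k r * (Q j r * w j) * (ρ*β^2*w k) = β^2*ρ*XWS := by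
      rw [hXWS, Finset.mul_sum, Finset.sum_comm]
      refine Finset.sum_congr rfl fun k _ => ?_
      rw [Finset.sum_comm]
      calc ∑ r, ∑ j, G22 k r * (Q j r * w j) * (ρ*β^2*w k)
          = ∑ r, G22 k r * s r * (ρ*β^2*w k) := by
            refine Finset.sum_congr rfl fun r _ => ?_
            rw [pull_right, ← Finset.mul_sum]
            congr 2
            rw [show (∑ j, Q j r * w j) = ∑ j, Q r j * w j from
              Finset.sum_congr rfl fun j _ => by rw [hQsym j r], hs r]
        _ = (∑ r, G22 k r * s r) * (ρ*β^2*w k) := pull_right _ _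
        _ = β^2*ρ*(w k * ∑ r, G22 k r * s r) := by ring
    have W3 : ∑ j, ∑ k, ∑ r, G22 j r * (Q r k * Qinv k j) * (β*ρ) = β*ρ*TB := by
      rw [hTB, Finset.mul_sum]
      refine Finset.sum_congr rfl fun j _ => ?_
      rw [Finset.sum_comm]
      calc ∑ r, ∑ k, G22 j r * (Q r k * Qinv k j) * (β*ρ)
          = ∑ r, G22 j r * (if r = j then (1:ℝ) else 0) * (β*ρ) := by
            refine Finset.sum_congr rfl fun r _ => ?_
            rw [pull_right, ← Finset.mul_sum, hQr r j]
        _ = β*ρ*G22 j j := by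
            simp [mul_ite, mul_one, mul_zero, ite_mul, zero_mul, Finset.sum_ite_eq']
            ring
    have W4 : ∑ j, ∑ k, ∑ r, G22 k r * (Qinv k j * Q j r) * (β*ρ) = β*ρ*TB := by
      rw [hTB, Finset.mul_sum, Finset.sum_comm]
      refine Finset.sum_congr rfl fun k _ => ?_
      rw [Finset.sum_comm]
      calc ∑ r, ∑ j, G22 k r * (Qinv k j * Q j r) * (β*ρ)
          = ∑ r, G22 k r * (if k = r then (1:ℝ) else 0) * (β*ρ) := by
            refine Finset.sum_congr rfl fun r _ => ?_
            rw [pull_right, ← Finset.mul_sum, hQl k r]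
        _ = β*ρ*G22 k k := by
            simp [mul_ite, mul_one, mul_zero, ite_mul, zero_mul, Finset.sum_ite_eq]
            ring
    rw [W1, W2, W3, W4]
    ring
  rw [L1, L2, L3]
  simp only [Finset.sum_add_distrib]
  rw [B11, B12, B21, B22]
  field_simp
  ring

set_option maxHeartbeats 2000000

/-- Under the fluctuation–dissipation relation, the Gibbs-type density
`ρ ∝ exp(−β(U(q) + ½pᵀM⁻¹p + ½sᵀQ⁻¹s))` solves the stationary Fokker–Planck equation of
the quasi-Markovian generalized Langevin equation pointwise. -/
theorem stmt1 {n m : ℕ} (hn : 0 < n) (hm : 0 < m) (β : ℝ) (hβ : 0 < β)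
    (M : Matrix (Fin n) (Fin n) ℝ) (hM : M.PosDef)
    (U : (Fin n → ℝ) → ℝ) (hU : ContDiff ℝ 2 U)
    (Γ Sig : (Fin n → ℝ) → Matrix (Fin (n + m)) (Fin (n + m)) ℝ)
    (hΓ : ∀ i j, ContDiff ℝ 1 (fun q => Γ q i j))
    (hSig : ∀ i j, ContDiff ℝ 1 (fun q => Sig q i j))
    (Γ11 : (Fin n → ℝ) → Matrix (Fin n) (Fin n) ℝ)
    (Γ12 : (Fin n → ℝ) → Matrix (Fin n) (Fin m) ℝ)
    (Γ21 : (Fin n → ℝ) → Matrix (Fin m) (Fin n) ℝ)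
    (Γ22 : (Fin n → ℝ) → Matrix (Fin m) (Fin m) ℝ)
    (hblocks : ∀ q, Γ q =
      (Matrix.fromBlocks (Γ11 q) (Γ12 q) (Γ21 q) (Γ22 q)).submatrix
        finSumFinEquiv.symm finSumFinEquiv.symm)
    (Q : Matrix (Fin m) (Fin m) ℝ) (hQ : Q.PosDef)
    (hFDR : ∀ q,
      Γ q * (Matrix.fromBlocks 1 0 0 Q).submatrix finSumFinEquiv.symm finSumFinEquiv.symm
        + (Matrix.fromBlocks 1 0 0 Q).submatrix finSumFinEquiv.symm finSumFinEquiv.symm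
          * (Γ q)ᵀ
      = Sig q * (Sig q)ᵀ) :
    ∀ x : (Fin n → ℝ) × (Fin n → ℝ) × (Fin m → ℝ),
      -- ⟨M⁻¹p, ∇_q ρ⟩
      (∑ i, M⁻¹.mulVec x.2.1 i * fderiv ℝ (gleDensity β U M Q) x (eQ n m i))
      -- div_p [ (−∇U(q) − Γ₁₁(q)M⁻¹p − Γ₁₂(q)s) ρ ]
      + (∑ i, fderiv ℝ
          (fun y => (-(fderiv ℝ U y.1 (Pi.single i 1))
            - (Γ11 y.1).mulVec (M⁻¹.mulVec y.2.1) i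
            - (Γ12 y.1).mulVec y.2.2 i) * gleDensity β U M Q y) x (eP n m i))
      -- div_s [ (−Γ₂₁(q)M⁻¹p − Γ₂₂(q)s) ρ ]
      + (∑ j, fderiv ℝ
          (fun y => (-((Γ21 y.1).mulVec (M⁻¹.mulVec y.2.1) j)
            - (Γ22 y.1).mulVec y.2.2 j) * gleDensity β U M Q y) x (eS n m j))
      = (1 / (2 * β)) * ∑ i, ∑ j, (Sig x.1 * (Sig x.1)ᵀ) i j
          * fderiv ℝ (fun y => fderiv ℝ (gleDensity β U M Q) y (eZ n m j)) x (eZ n m i) := by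
  intro x
  have hMT : Mᵀ = M := by
    have := hM.1
    rwa [Matrix.IsHermitian, Matrix.conjTranspose_eq_transpose_of_trivial] at this
  have hQT : Qᵀ = Q := by
    have := hQ.1
    rwa [Matrix.IsHermitian, Matrix.conjTranspose_eq_transpose_of_trivial] at this
  have hMs : M⁻¹ᵀ = M⁻¹ := by rw [Matrix.transpose_nonsing_inv, hMT]
  have hQs : Q⁻¹ᵀ = Q⁻¹ := by rw [Matrix.transpose_nonsing_inv, hQT]
  have hQdet : IsUnit Q.det := isUnit_iff_ne_zero.mpr hQ.det_pos.ne'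
  have hQQ : Q *ᵥ (Q⁻¹ *ᵥ x.2.2) = x.2.2 := by
    rw [Matrix.mulVec_mulVec, Matrix.mul_nonsing_inv Q hQdet, Matrix.one_mulVec]
  have hUd : Differentiable ℝ U := hU.differentiable (by norm_num)
  have hdU : ∀ i : Fin n, Differentiable ℝ (fun q => fderiv ℝ U q (Pi.single i 1)) := by
    intro i
    have h1 : ContDiff ℝ 1 (fderiv ℝ U) := hU.fderiv_right (by norm_num)
    have h2 : (fun q => fderiv ℝ U q (Pi.single i 1)) =
        (⇑(ContinuousLinearMap.apply ℝ ℝ (Pi.single i 1)) ∘ fderiv ℝ U) := rfl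
    rw [h2]
    exact (ContinuousLinearMap.apply ℝ ℝ (Pi.single i 1)).differentiable.comp
      (h1.differentiable one_ne_zero)
  have hentry : ∀ (i j : Fin (n + m)), Differentiable ℝ (fun q => Γ q i j) :=
    fun i j => (hΓ i j).differentiable one_ne_zero
  have hΓ11d : ∀ i k, Differentiable ℝ (fun q => Γ11 q i k) := by
    intro i k
    have : (fun q => Γ11 q i k) = fun q => Γ q (Fin.castAdd m i) (Fin.castAdd m k) := by
      funext q; rw [hblocks q]; simp
    rw [this]; exact hentry _ _
  have hΓ12d : ∀ i k, Differentiable ℝ (fun q => Γ12 q i k) := by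
    intro i k
    have : (fun q => Γ12 q i k) = fun q => Γ q (Fin.castAdd m i) (Fin.natAdd n k) := by
      funext q; rw [hblocks q]; simp
    rw [this]; exact hentry _ _
  have hΓ21d : ∀ i k, Differentiable ℝ (fun q => Γ21 q i k) := by
    intro i k
    have : (fun q => Γ21 q i k) = fun q => Γ q (Fin.natAdd n i) (Fin.castAdd m k) := by
      funext q; rw [hblocks q]; simp
    rw [this]; exact hentry _ _
  have hΓ22d : ∀ i k, Differentiable ℝ (fun q => Γ22 q i k) := by
    intro i k
    have : (fun q => Γ22 q i k) = fun q => Γ q (Fin.natAdd n i) (Fin.natAdd n k) := by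
      funext q; rw [hblocks q]; simp
    rw [this]; exact hentry _ _
  have hρd : ∀ y : EE n m, HasFDerivAt (gleDensity β U M Q)
      ((-β * gleDensity β U M Q y) •
        ((fderiv ℝ U y.1).comp (ContinuousLinearMap.fst ℝ (Fin n → ℝ) ((Fin n → ℝ) × (Fin m → ℝ)))
          + (dotCLM (M⁻¹ *ᵥ y.2.1)).comp (pCLM n m)
          + (dotCLM (Q⁻¹ *ᵥ y.2.2)).comp (sCLM n m))) y :=
    fun y => gle_hasFDerivAt β U M Q hMs hQs y (hUd y.1)
  have hρap : ∀ (y v : EE n m), fderiv ℝ (gleDensity β U M Q) y v =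
      -β * gleDensity β U M Q y *
        (fderiv ℝ U y.1 v.1 + (M⁻¹ *ᵥ y.2.1) ⬝ᵥ v.2.1 + (Q⁻¹ *ᵥ y.2.2) ⬝ᵥ v.2.2) :=
    fun y v => gle_fderiv_apply β U M Q hMs hQs y (hUd y.1) v
  -- Term 1
  have hT1 : ∀ i : Fin n, fderiv ℝ (gleDensity β U M Q) x (eQ n m i) =
      -β * gleDensity β U M Q x * fderiv ℝ U x.1 (Pi.single i 1) := by
    intro i
    rw [hρap]
    simp [eQ]
  -- Term 2
  have hT2 : ∀ i : Fin n, fderiv ℝ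
      (fun y => (-(fderiv ℝ U y.1 (Pi.single i 1))
        - (Γ11 y.1).mulVec (M⁻¹.mulVec y.2.1) i
        - (Γ12 y.1).mulVec y.2.2 i) * gleDensity β U M Q y) x (eP n m i) =
      -(∑ k, Γ11 x.1 i k * M⁻¹ k i) * gleDensity β U M Q x
        + (-(fderiv ℝ U x.1 (Pi.single i 1))
            - (∑ k, Γ11 x.1 i k * (M⁻¹ *ᵥ x.2.1) k)
            - (∑ k, Γ12 x.1 i k * x.2.2 k))
          * (-β * gleDensity β U M Q x * (M⁻¹ *ᵥ x.2.1) i) := by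
    intro i
    have hb := ((((hasFDerivAt_comp_fst ((hdU i) x.1)).neg).sub
        (HasFDerivAt.sum (fun k (_ : k ∈ Finset.univ) =>
          (hasFDerivAt_comp_fst ((hΓ11d i k) x.1)).mul (hasFDerivAt_pA M⁻¹ k x)))).sub
        (HasFDerivAt.sum (fun k (_ : k ∈ Finset.univ) =>
          (hasFDerivAt_comp_fst ((hΓ12d i k) x.1)).mul (hasFDerivAt_scoord k x)))).mul (hρd x)
    have htop := hb.congr_of_eventuallyEq
      (f₁ := fun y => (-(fderiv ℝ U y.1 (Pi.single i 1))
        - (Γ11 y.1).mulVec (M⁻¹.mulVec y.2.1) i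
        - (Γ12 y.1).mulVec y.2.2 i) * gleDensity β U M Q y)
      (Filter.Eventually.of_forall fun y => by simp [Matrix.mulVec, dotProduct])
    rw [htop.fderiv]
    simp [eP, ContinuousLinearMap.add_apply, ContinuousLinearMap.sum_apply,
      ContinuousLinearMap.comp_apply, ContinuousLinearMap.smul_apply,
      ContinuousLinearMap.proj_apply, Matrix.mulVec_single, dotProduct_single,
      Matrix.mulVec, dotProduct, Pi.single_apply, Finset.mul_sum, Finset.sum_mul, mul_ite]
    ring_nf
  -- Term 3
  have hT3 : ∀ j : Fin m, fderiv ℝ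
      (fun y => (-((Γ21 y.1).mulVec (M⁻¹.mulVec y.2.1) j)
        - (Γ22 y.1).mulVec y.2.2 j) * gleDensity β U M Q y) x (eS n m j) =
      -(Γ22 x.1 j j) * gleDensity β U M Q x
        + (-(∑ k, Γ21 x.1 j k * (M⁻¹ *ᵥ x.2.1) k)
            - (∑ k, Γ22 x.1 j k * x.2.2 k))
          * (-β * gleDensity β U M Q x * (Q⁻¹ *ᵥ x.2.2) j) := by
    intro j
    have hb := (((HasFDerivAt.sum (fun k (_ : k ∈ Finset.univ) =>
          (hasFDerivAt_comp_fst ((hΓ21d j k) x.1)).mul (hasFDerivAt_pA M⁻¹ k x))).neg).sub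
        (HasFDerivAt.sum (fun k (_ : k ∈ Finset.univ) =>
          (hasFDerivAt_comp_fst ((hΓ22d j k) x.1)).mul (hasFDerivAt_scoord k x)))).mul (hρd x)
    have htop := hb.congr_of_eventuallyEq
      (f₁ := fun y => (-((Γ21 y.1).mulVec (M⁻¹.mulVec y.2.1) j)
        - (Γ22 y.1).mulVec y.2.2 j) * gleDensity β U M Q y)
      (Filter.Eventually.of_forall fun y => by simp [Matrix.mulVec, dotProduct])
    rw [htop.fderiv]
    simp [eS, ContinuousLinearMap.add_apply, ContinuousLinearMap.sum_apply,
      ContinuousLinearMap.comp_apply, ContinuousLinearMap.smul_apply,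
      ContinuousLinearMap.proj_apply, Matrix.mulVec_single, dotProduct_single,
      Matrix.mulVec, dotProduct, Pi.single_apply, Finset.mul_sum, Finset.sum_mul, mul_ite]
    ring_nf
  -- derivative of rho in p/s coordinate directions, as a function
  have hfp : ∀ l : Fin n, (fun y : EE n m => fderiv ℝ (gleDensity β U M Q) y (eP n m l)) =
      fun y => (M⁻¹ *ᵥ y.2.1) l * (-β * gleDensity β U M Q y) := by
    intro l; funext y; rw [hρap]; simp [eP]; ring
  have hfs : ∀ l : Fin m, (fun y : EE n m => fderiv ℝ (gleDensity β U M Q) y (eS n m l)) =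
      fun y => (Q⁻¹ *ᵥ y.2.2) l * (-β * gleDensity β U M Q y) := by
    intro l; funext y; rw [hρap]; simp [eS]; ring
  -- the four second-derivative blocks
  have hPP : ∀ (k l : Fin n), fderiv ℝ
      (fun y : EE n m => (M⁻¹ *ᵥ y.2.1) l * (-β * gleDensity β U M Q y)) x (eP n m k) =
      gleDensity β U M Q x * (β^2 * (M⁻¹ *ᵥ x.2.1) k * (M⁻¹ *ᵥ x.2.1) l)
        - β * gleDensity β U M Q x * M⁻¹ l k := by
    intro k l
    have hb := (hasFDerivAt_pA M⁻¹ l x).mul ((hρd x).const_mul (-β))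
    rw [HasFDerivAt.fderiv (f := (fun y : EE n m => (M⁻¹ *ᵥ y.2.1) l * (-β * gleDensity β U M Q y))) hb]
    simp [eP, ContinuousLinearMap.add_apply]
    ring
  have hPS : ∀ (k : Fin m) (l : Fin n), fderiv ℝ
      (fun y : EE n m => (M⁻¹ *ᵥ y.2.1) l * (-β * gleDensity β U M Q y)) x (eS n m k) =
      gleDensity β U M Q x * (β^2 * (Q⁻¹ *ᵥ x.2.2) k * (M⁻¹ *ᵥ x.2.1) l) := by
    intro k l
    have hb := (hasFDerivAt_pA M⁻¹ l x).mul ((hρd x).const_mul (-β))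
    rw [HasFDerivAt.fderiv (f := (fun y : EE n m => (M⁻¹ *ᵥ y.2.1) l * (-β * gleDensity β U M Q y))) hb]
    simp [eS, ContinuousLinearMap.add_apply]
    ring
  have hSP : ∀ (k : Fin n) (l : Fin m), fderiv ℝ
      (fun y : EE n m => (Q⁻¹ *ᵥ y.2.2) l * (-β * gleDensity β U M Q y)) x (eP n m k) =
      gleDensity β U M Q x * (β^2 * (M⁻¹ *ᵥ x.2.1) k * (Q⁻¹ *ᵥ x.2.2) l) := by
    intro k l
    have hb := (hasFDerivAt_sA Q⁻¹ l x).mul ((hρd x).const_mul (-β))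
    rw [HasFDerivAt.fderiv (f := (fun y : EE n m => (Q⁻¹ *ᵥ y.2.2) l * (-β * gleDensity β U M Q y))) hb]
    simp [eP, ContinuousLinearMap.add_apply]
    ring
  have hSS : ∀ (k l : Fin m), fderiv ℝ
      (fun y : EE n m => (Q⁻¹ *ᵥ y.2.2) l * (-β * gleDensity β U M Q y)) x (eS n m k) =
      gleDensity β U M Q x * (β^2 * (Q⁻¹ *ᵥ x.2.2) k * (Q⁻¹ *ᵥ x.2.2) l)
        - β * gleDensity β U M Q x * Q⁻¹ l k := by
    intro k l
    have hb := (hasFDerivAt_sA Q⁻¹ l x).mul ((hρd x).const_mul (-β))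
    rw [HasFDerivAt.fderiv (f := (fun y : EE n m => (Q⁻¹ *ᵥ y.2.2) l * (-β * gleDensity β U M Q y))) hb]
    simp [eS, ContinuousLinearMap.add_apply]
    ring
  have eZc : ∀ k : Fin n, eZ n m (Fin.castAdd m k) = eP n m k := by
    intro k; simp [eZ]
  have eZn : ∀ k : Fin m, eZ n m (Fin.natAdd n k) = eS n m k := by
    intro k; simp [eZ]
  -- FDR in block form
  have hAmat : Sig x.1 * (Sig x.1)ᵀ =
      (Matrix.fromBlocks (Γ11 x.1 + (Γ11 x.1)ᵀ) (Γ12 x.1 * Q + (Γ21 x.1)ᵀ)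
        (Γ21 x.1 + Q * (Γ12 x.1)ᵀ) (Γ22 x.1 * Q + Q * (Γ22 x.1)ᵀ)).submatrix
          finSumFinEquiv.symm finSumFinEquiv.symm := by
    rw [← hFDR x.1, hblocks x.1]
    rw [Matrix.transpose_submatrix, Matrix.fromBlocks_transpose]
    rw [Matrix.submatrix_mul_equiv, Matrix.submatrix_mul_equiv]
    rw [Matrix.fromBlocks_multiply, Matrix.fromBlocks_multiply]
    simp [Matrix.mul_one, Matrix.mul_zero, Matrix.one_mul, Matrix.zero_mul,
      add_zero, zero_add]
    ext a b
    simp [Matrix.submatrix_apply, ← Matrix.fromBlocks_add, Matrix.add_apply]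
  simp only [hT1, hT2, hT3]
  simp only [Fin.sum_univ_add]
  simp only [eZc, eZn, hfp, hfs, hPP, hPS, hSP, hSS]
  simp only [hAmat, Matrix.submatrix_apply, finSumFinEquiv_symm_apply_castAdd,
    finSumFinEquiv_symm_apply_natAdd, Matrix.fromBlocks_apply₁₁, Matrix.fromBlocks_apply₁₂,
    Matrix.fromBlocks_apply₂₁, Matrix.fromBlocks_apply₂₂, Matrix.add_apply,
    Matrix.transpose_apply]
  simp only [Matrix.mul_apply, Matrix.transpose_apply]
  have hMsym' : ∀ a b, M⁻¹ a b = M⁻¹ b a := by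
    intro a b
    have h := congrFun (congrFun hMs b) a
    rwa [Matrix.transpose_apply] at h
  have hQsym' : ∀ a b, Q a b = Q b a := by
    intro a b
    have h := congrFun (congrFun hQT b) a
    rwa [Matrix.transpose_apply] at h
  have hQr' : ∀ a b, (∑ l, Q a l * Q⁻¹ l b) = if a = b then (1:ℝ) else 0 := by
    intro a b
    have h := congrFun (congrFun (Matrix.mul_nonsing_inv Q hQdet) a) b
    rw [Matrix.mul_apply] at h
    rw [h, Matrix.one_apply]
  have hQl' : ∀ a b, (∑ l, Q⁻¹ a l * Q l b) = if a = b then (1:ℝ) else 0 := by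
    intro a b
    have h := congrFun (congrFun (Matrix.nonsing_inv_mul Q hQdet) a) b
    rw [Matrix.mul_apply] at h
    rw [h, Matrix.one_apply]
  have hs' : ∀ r, (∑ l, Q r l * (Q⁻¹ *ᵥ x.2.2) l) = x.2.2 r := by
    intro r
    have h := congrFun hQQ r
    simpa [Matrix.mulVec, dotProduct] using h
  exact gle_final_algebra hβ.ne' (M⁻¹ *ᵥ x.2.1)
    (fun i => fderiv ℝ U x.1 (Pi.single i 1)) (Q⁻¹ *ᵥ x.2.2) x.2.2
    (Γ11 x.1) (Γ12 x.1) (Γ21 x.1) (Γ22 x.1) Q Q⁻¹ M⁻¹ hMsym' hQsym' hQr' hQl' hs'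
end

section
/- Let n, m be positive integers, let F : ℝⁿ → ℝⁿ be continuous, let Γ ∈ ℝ^{(n+m)×(n+m)} have blocks Γ₁₁ ∈ ℝ^{n×n}, Γ₁₂ ∈ ℝ^{n×m}, Γ₂₁ ∈ ℝ^{m×n}, Γ₂₂ ∈ ℝ^{m×m}, and let Σ ∈ ℝ^{(n+m)×(n+m)} be invertible with Σ₁ ∈ ℝ^{n×(n+m)} its top n rows and Σ₂ ∈ ℝ^{m×(n+m)} its bottom m rows. Then for every T > 0 and every pair of points (q⁻,p⁻,s⁻), (q⁺,p⁺,s⁺) ∈ ℝⁿ×ℝⁿ×ℝᵐ there exist a continuous control u : [0,T] → ℝ^{n+m} and continuously differentiable functions q : [0,T] → ℝⁿ, p : [0,T] → ℝⁿ, s : [0,T] → ℝᵐ such that for all t ∈ [0,T]: q′(t) = p(t), p′(t) = F(q(t)) − Γ₁₁·p(t) − Γ₁₂·s(t) + Σ₁·u(t), s′(t) = −Γ₂₁·p(t) − Γ₂₂·s(t) + Σ₂·u(t), with boundary conditions (q(0),p(0),s(0)) = (q⁻,p⁻,s⁻) and (q(T),p(T),s(T)) = (q⁺,p⁺,s⁺).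 -/
open Matrix Set

/-- Exact controllability of the deterministic control system associated with the
extended-variable quasi-Markovian GLE with invertible noise matrix `Σ`. -/
theorem stmt8 {n m : ℕ} (hn : 0 < n) (hm : 0 < m)
    (F : (Fin n → ℝ) → (Fin n → ℝ)) (hF : Continuous F)
    (Γ11 : Matrix (Fin n) (Fin n) ℝ) (Γ12 : Matrix (Fin n) (Fin m) ℝ)
    (Γ21 : Matrix (Fin m) (Fin n) ℝ) (Γ22 : Matrix (Fin m) (Fin m) ℝ)
    (Sig : Matrix (Fin (n + m)) (Fin (n + m)) ℝ) (hSig : IsUnit Sig.det) :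
    ∀ T : ℝ, 0 < T →
    ∀ (qm pm : Fin n → ℝ) (sm : Fin m → ℝ) (qp pp : Fin n → ℝ) (sp : Fin m → ℝ),
    ∃ (u : ℝ → (Fin (n + m) → ℝ)) (q p : ℝ → (Fin n → ℝ)) (s : ℝ → (Fin m → ℝ)),
      ContinuousOn u (Icc 0 T) ∧
      (∀ t ∈ Icc (0 : ℝ) T, HasDerivAt q (p t) t) ∧
      (∀ t ∈ Icc (0 : ℝ) T, HasDerivAt p
        (F (q t) - Γ11.mulVec (p t) - Γ12.mulVec (s t)
          + (Sig.submatrix (Fin.castAdd m) id).mulVec (u t)) t) ∧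
      (∀ t ∈ Icc (0 : ℝ) T, HasDerivAt s
        (-Γ21.mulVec (p t) - Γ22.mulVec (s t)
          + (Sig.submatrix (Fin.natAdd n) id).mulVec (u t)) t) ∧
      q 0 = qm ∧ p 0 = pm ∧ s 0 = sm ∧ q T = qp ∧ p T = pp ∧ s T = sp := by
  intro T hT qm pm sm qp pp sp
  have hT0 : T ≠ 0 := ne_of_gt hT
  -- coefficients of the cubic Hermite interpolant for q
  set A : Fin n → ℝ := qp - qm - T • pm with hA
  set B : Fin n → ℝ := pp - pm with hB
  set c2 : Fin n → ℝ := (T ^ 2)⁻¹ • ((3 : ℝ) • A - T • B) with hc2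
  set c3 : Fin n → ℝ := (T ^ 3)⁻¹ • (T • B - (2 : ℝ) • A) with hc3
  set q : ℝ → Fin n → ℝ := fun t => qm + t • pm + (t ^ 2) • c2 + (t ^ 3) • c3 with hq
  set p : ℝ → Fin n → ℝ := fun t => pm + (2 * t) • c2 + (3 * t ^ 2) • c3 with hp
  set dp : ℝ → Fin n → ℝ := fun t => (2 : ℝ) • c2 + (6 * t) • c3 with hdp
  set s : ℝ → Fin m → ℝ := fun t => sm + (t / T) • (sp - sm) with hs
  set ds : Fin m → ℝ := (1 / T) • (sp - sm) with hds
  -- the control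
  set v : ℝ → Fin (n + m) → ℝ := fun t =>
    Fin.append (dp t - F (q t) + Γ11.mulVec (p t) + Γ12.mulVec (s t))
               (ds + Γ21.mulVec (p t) + Γ22.mulVec (s t)) with hv
  set u : ℝ → Fin (n + m) → ℝ := fun t => Sig⁻¹.mulVec (v t) with hu
  -- derivatives
  have hq' : ∀ t : ℝ, HasDerivAt q (p t) t := by
    intro t
    have h1 : HasDerivAt (fun t : ℝ => qm + t • pm + (t ^ 2) • c2 + (t ^ 3) • c3)
        ((1 : ℝ) • pm + ((2 : ℕ) * t ^ 1) • c2 + ((3 : ℕ) * t ^ 2) • c3) t := by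
      exact ((((hasDerivAt_id t).smul_const pm).const_add qm).add
        ((hasDerivAt_pow 2 t).smul_const c2)).add ((hasDerivAt_pow 3 t).smul_const c3)
    convert h1 using 1
    funext i
    simp only [hp, Pi.add_apply, Pi.smul_apply, smul_eq_mul]
    push_cast
    ring
  have hp' : ∀ t : ℝ, HasDerivAt p (dp t) t := by
    intro t
    have h1 : HasDerivAt (fun t : ℝ => pm + (2 * t) • c2 + (3 * t ^ 2) • c3)
        (((2 : ℝ) * 1) • c2 + ((3 : ℝ) * ((2 : ℕ) * t ^ 1)) • c3) t := by
      exact ((((hasDerivAt_id t).const_mul 2).smul_const c2).const_add pm).add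
        (((hasDerivAt_pow 2 t).const_mul 3).smul_const c3)
    convert h1 using 1
    funext i
    simp only [hdp, Pi.add_apply, Pi.smul_apply, smul_eq_mul]
    push_cast
    ring
  have hs' : ∀ t : ℝ, HasDerivAt s ds t := by
    intro t
    have h1 : HasDerivAt (fun t : ℝ => sm + (t / T) • (sp - sm)) ((1 / T) • (sp - sm)) t := by
      have := ((hasDerivAt_id t).div_const T).smul_const (sp - sm)
      simpa [one_div] using this.const_add sm
    rw [hds]; exact h1
  -- continuity
  have hqc : Continuous q := by
    apply Continuous.add; apply Continuous.add; apply Continuous.add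
    · exact continuous_const
    · exact (continuous_id.smul continuous_const)
    · exact ((continuous_pow 2).smul continuous_const)
    · exact ((continuous_pow 3).smul continuous_const)
  have hpc : Continuous p := by
    apply Continuous.add; apply Continuous.add
    · exact continuous_const
    · exact ((continuous_const.mul continuous_id).smul continuous_const)
    · exact ((continuous_const.mul (continuous_pow 2)).smul continuous_const)
  have hdpc : Continuous dp := by
    apply Continuous.add
    · exact continuous_const
    · exact ((continuous_const.mul continuous_id).smul continuous_const)
  have hsc : Continuous s := by
    exact continuous_const.add ((continuous_id.div_const T).smul continuous_const)
  have hmvc : ∀ {k l : ℕ} (M : Matrix (Fin k) (Fin l) ℝ) (f : ℝ → Fin l → ℝ),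
      Continuous f → Continuous (fun t => M.mulVec (f t)) := by
    intro k l M f hf
    have : Continuous (M.mulVecLin : (Fin l → ℝ) →ₗ[ℝ] (Fin k → ℝ)) :=
      LinearMap.continuous_of_finiteDimensional _
    exact this.comp hf
  have hvc : Continuous v := by
    apply continuous_pi
    intro j
    induction j using Fin.addCases with
    | left i =>
        simp only [hv, Fin.append_left]
        have : Continuous fun t => (dp t - F (q t) + Γ11.mulVec (p t) + Γ12.mulVec (s t)) :=
          ((hdpc.sub (hF.comp hqc)).add (hmvc Γ11 p hpc)).add (hmvc Γ12 s hsc)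
        exact (continuous_apply i).comp this
    | right i =>
        simp only [hv, Fin.append_right]
        have : Continuous fun t => (ds + Γ21.mulVec (p t) + Γ22.mulVec (s t)) :=
          (continuous_const.add (hmvc Γ21 p hpc)).add (hmvc Γ22 s hsc)
        exact (continuous_apply i).comp this
  have huc : Continuous u := hmvc Sig⁻¹ v hvc
  -- key identity: Σ u = v
  have hSu : ∀ t, Sig.mulVec (u t) = v t := by
    intro t
    rw [hu, Matrix.mulVec_mulVec, Matrix.mul_nonsing_inv Sig hSig, Matrix.one_mulVec]
  have hsub1 : ∀ (x : Fin (n + m) → ℝ),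
      (Sig.submatrix (Fin.castAdd m) id).mulVec x = fun i => Sig.mulVec x (Fin.castAdd m i) := by
    intro x; rfl
  have hsub2 : ∀ (x : Fin (n + m) → ℝ),
      (Sig.submatrix (Fin.natAdd n) id).mulVec x = fun i => Sig.mulVec x (Fin.natAdd n i) := by
    intro x; rfl
  have hSu1 : ∀ t, (Sig.submatrix (Fin.castAdd m) id).mulVec (u t)
      = dp t - F (q t) + Γ11.mulVec (p t) + Γ12.mulVec (s t) := by
    intro t
    rw [hsub1]
    funext i
    rw [hSu t]
    simp [hv, Fin.append_left]
  have hSu2 : ∀ t, (Sig.submatrix (Fin.natAdd n) id).mulVec (u t)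
      = ds + Γ21.mulVec (p t) + Γ22.mulVec (s t) := by
    intro t
    rw [hsub2]
    funext i
    rw [hSu t]
    simp [hv, Fin.append_right]
  refine ⟨u, q, p, s, huc.continuousOn, fun t _ => hq' t, fun t _ => ?_, fun t _ => ?_,
    ?_, ?_, ?_, ?_, ?_, ?_⟩
  · have : F (q t) - Γ11.mulVec (p t) - Γ12.mulVec (s t)
        + (Sig.submatrix (Fin.castAdd m) id).mulVec (u t) = dp t := by
      rw [hSu1 t]; abel
    rw [this]; exact hp' t
  · have : -Γ21.mulVec (p t) - Γ22.mulVec (s t)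
        + (Sig.submatrix (Fin.natAdd n) id).mulVec (u t) = ds := by
      rw [hSu2 t]; abel
    rw [this]; exact hs' t
  · funext i; simp [hq]
  · funext i; simp [hp]
  · funext i; simp [hs]
  · funext i
    simp only [hq, hc2, hc3, hA, hB, Pi.add_apply, Pi.smul_apply, Pi.sub_apply,
      smul_eq_mul]
    field_simp
    ring
  · funext i
    simp only [hp, hc2, hc3, hA, hB, Pi.add_apply, Pi.smul_apply, Pi.sub_apply,
      smul_eq_mul]
    field_simp
    ring
  · funext i
    simp only [hs, Pi.add_apply, Pi.smul_apply, Pi.sub_apply, smul_eq_mul]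
    field_simp
    ring
end

section
/- For q ∈ ℝ let γ(q) = 2 + cos(2πq), let Γ(q) be the 2×2 real matrix [[0, −γ(q)],[γ(q), 1]], and let C be the 2×2 real matrix [[19/18, −1/6],[−1/6, 1]]. Then C is symmetric positive definite, and for every q ∈ ℝ the symmetric matrix Γ(q)·C + C·Γ(q)ᵀ is positive definite. -/
open Matrix

lemma posdef_fin_two (a b c : ℝ) (ha : 0 < a) (hd : 0 < a * c - b * b) :
    (!![a, b; b, c] : Matrix (Fin 2) (Fin 2) ℝ).PosDef := by
  rw [Matrix.posDef_iff_dotProduct_mulVec]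
  constructor
  · ext i j
    fin_cases i <;> fin_cases j <;> simp [Matrix.conjTranspose_apply]
  · intro x hx
    have hx' : x 0 ≠ 0 ∨ x 1 ≠ 0 := by
      by_contra h
      push_neg at h
      exact hx (funext fun i => by fin_cases i <;> simp [h.1, h.2])
    simp only [dotProduct, Matrix.mulVec, Fin.sum_univ_two, star_trivial]
    norm_num [Matrix.cons_val_zero, Matrix.cons_val_one]
    rcases eq_or_ne (x 1) 0 with h1 | h1
    · have h0 : x 0 ≠ 0 := hx'.resolve_right (fun h => h h1)
      have := mul_pos ha (mul_self_pos.mpr h0)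
      rw [h1]; ring_nf; nlinarith
    · nlinarith [sq_nonneg (a * x 0 + b * x 1), mul_pos hd (mul_self_pos.mpr h1)]

/-- For the concrete one-dimensional GLE example with `γ(q) = 2 + cos(2πq)`,
`Γ(q) = [[0, −γ(q)],[γ(q), 1]]` and `C = [[19/18, −1/6],[−1/6, 1]]`, the matrix `C` is
positive definite and `Γ(q)C + CΓ(q)ᵀ` is positive definite for every `q`. -/
theorem stmt10 :
    (!![19 / 18, -(1 / 6); -(1 / 6), 1] : Matrix (Fin 2) (Fin 2) ℝ).PosDef ∧
    ∀ q : ℝ,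
      ((!![0, -(2 + Real.cos (2 * Real.pi * q)); 2 + Real.cos (2 * Real.pi * q), 1] :
          Matrix (Fin 2) (Fin 2) ℝ)
        * !![19 / 18, -(1 / 6); -(1 / 6), 1]
        + (!![19 / 18, -(1 / 6); -(1 / 6), 1] : Matrix (Fin 2) (Fin 2) ℝ)
        * (!![0, -(2 + Real.cos (2 * Real.pi * q)); 2 + Real.cos (2 * Real.pi * q), 1])ᵀ).PosDef := by
  constructor
  · apply posdef_fin_two <;> norm_num
  · intro q
    set g : ℝ := 2 + Real.cos (2 * Real.pi * q) with hg
    have hc1 := Real.neg_one_le_cos (2 * Real.pi * q)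
    have hc2 := Real.cos_le_one (2 * Real.pi * q)
    have hmat : (!![0, -g; g, 1] : Matrix (Fin 2) (Fin 2) ℝ)
          * !![19 / 18, -(1 / 6); -(1 / 6), 1]
        + (!![19 / 18, -(1 / 6); -(1 / 6), 1] : Matrix (Fin 2) (Fin 2) ℝ)
          * (!![0, -g; g, 1])ᵀ
        = !![g / 3, g / 18 - 1 / 6; g / 18 - 1 / 6, 2 - g / 3] := by
      have ht : (!![0, -g; g, 1] : Matrix (Fin 2) (Fin 2) ℝ)ᵀ = !![0, g; -g, 1] := by
        ext i j; fin_cases i <;> fin_cases j <;> rfl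
      rw [ht]
      ext i j
      fin_cases i <;> fin_cases j <;>
        simp [Matrix.mul_apply, Matrix.transpose_apply, Fin.sum_univ_two] <;> ring
    rw [hmat]
    apply posdef_fin_two
    · nlinarith
    · nlinarith
end

section
/- Let n ≤ m be positive integers, let Q ∈ ℝ^{m×m} be symmetric positive definite, let G ∈ ℝ^{m×n} be an arbitrary matrix, and let A ≥ 0 be a real number. Then there exists B₀ > 0 such that for every B ≥ B₀ the symmetric block matrix [[Iₙ, Iₙ, 0],[Iₙ, B·Iₙ, A·Gᵀ],[0, A·G, B·Q⁻¹]] ∈ ℝ^{(2n+m)×(2n+m)} is positive definite. -/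
open Matrix

section Helpers
variable {p q : Type*} [Fintype p] [Fintype q] [DecidableEq p] [DecidableEq q]

set_option linter.unusedSectionVars false

lemma myPosDef_smul {M : Matrix p p ℝ} (hM : M.PosDef) {c : ℝ} (hc : 0 < c) :
    (c • M).PosDef := by
  refine posDef_iff_dotProduct_mulVec.mpr ⟨?_, fun x hx => ?_⟩
  · show (c • M)ᴴ = c • M
    rw [conjTranspose_smul, star_trivial, hM.1.eq]
  · rw [smul_mulVec, dotProduct_smul]
    exact mul_pos hc (hM.dotProduct_mulVec_pos hx)

lemma myPosDef_fromBlocks₂₂ (A : Matrix p p ℝ) (B : Matrix p q ℝ) {D : Matrix q q ℝ}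
    (hD : D.PosDef) (hS : (A - B * D⁻¹ * Bᴴ).PosDef) :
    (fromBlocks A B Bᴴ D).PosDef := by
  haveI : Invertible D := D.invertibleOfIsUnitDet (isUnit_iff_isUnit_det D |>.mp hD.isUnit)
  refine posDef_iff_dotProduct_mulVec.mpr ⟨(IsHermitian.fromBlocks₂₂ A B hD.1).mpr hS.1, fun x hx => ?_⟩
  rw [dotProduct_mulVec, ← Sum.elim_comp_inl_inr x, schur_complement_eq₂₂ A B _ _ hD.1]
  by_cases hu : x ∘ Sum.inl = 0
  · have hv : x ∘ Sum.inr ≠ 0 := by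
      intro hv
      apply hx
      rw [← Sum.elim_comp_inl_inr x, hu, hv]
      simp
    have h1 : 0 < star ((D⁻¹ * Bᴴ) *ᵥ (x ∘ Sum.inl) + x ∘ Sum.inr) ᵥ* D ⬝ᵥ
        ((D⁻¹ * Bᴴ) *ᵥ (x ∘ Sum.inl) + x ∘ Sum.inr) := by
      rw [← dotProduct_mulVec]
      apply hD.dotProduct_mulVec_pos
      simp [hu, hv]
    have h2 : (0:ℝ) ≤ star (x ∘ Sum.inl) ᵥ* (A - B * D⁻¹ * Bᴴ) ⬝ᵥ (x ∘ Sum.inl) := by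
      rw [← dotProduct_mulVec]
      exact hS.posSemidef.dotProduct_mulVec_nonneg _
    linarith
  · have h1 : (0:ℝ) ≤ star ((D⁻¹ * Bᴴ) *ᵥ (x ∘ Sum.inl) + x ∘ Sum.inr) ᵥ* D ⬝ᵥ
        ((D⁻¹ * Bᴴ) *ᵥ (x ∘ Sum.inl) + x ∘ Sum.inr) := by
      rw [← dotProduct_mulVec]
      exact hD.posSemidef.dotProduct_mulVec_nonneg _
    have h2 : 0 < star (x ∘ Sum.inl) ᵥ* (A - B * D⁻¹ * Bᴴ) ⬝ᵥ (x ∘ Sum.inl) := by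
      rw [← dotProduct_mulVec]
      exact hS.dotProduct_mulVec_pos hu
    linarith

lemma myPosDef_fromBlocks₁₁ {A : Matrix p p ℝ} (B : Matrix p q ℝ) (D : Matrix q q ℝ)
    (hA : A.PosDef) (hS : (D - Bᴴ * A⁻¹ * B).PosDef) :
    (fromBlocks A B Bᴴ D).PosDef := by
  haveI : Invertible A := A.invertibleOfIsUnitDet (isUnit_iff_isUnit_det A |>.mp hA.isUnit)
  refine posDef_iff_dotProduct_mulVec.mpr ⟨(IsHermitian.fromBlocks₁₁ B D hA.1).mpr hS.1, fun x hx => ?_⟩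
  rw [dotProduct_mulVec, ← Sum.elim_comp_inl_inr x, schur_complement_eq₁₁ B D _ _ hA.1]
  by_cases hv : x ∘ Sum.inr = 0
  · have hu : x ∘ Sum.inl ≠ 0 := by
      intro hu
      apply hx
      rw [← Sum.elim_comp_inl_inr x, hu, hv]
      simp
    have h1 : 0 < star (x ∘ Sum.inl + (A⁻¹ * B) *ᵥ (x ∘ Sum.inr)) ᵥ* A ⬝ᵥ
        (x ∘ Sum.inl + (A⁻¹ * B) *ᵥ (x ∘ Sum.inr)) := by
      rw [← dotProduct_mulVec]
      apply hA.dotProduct_mulVec_pos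
      simp [hu, hv]
    have h2 : (0:ℝ) ≤ star (x ∘ Sum.inr) ᵥ* (D - Bᴴ * A⁻¹ * B) ⬝ᵥ (x ∘ Sum.inr) := by
      rw [← dotProduct_mulVec]
      exact hS.posSemidef.dotProduct_mulVec_nonneg _
    linarith
  · have h1 : (0:ℝ) ≤ star (x ∘ Sum.inl + (A⁻¹ * B) *ᵥ (x ∘ Sum.inr)) ᵥ* A ⬝ᵥ
        (x ∘ Sum.inl + (A⁻¹ * B) *ᵥ (x ∘ Sum.inr)) := by
      rw [← dotProduct_mulVec]
      exact hA.posSemidef.dotProduct_mulVec_nonneg _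
    have h2 : 0 < star (x ∘ Sum.inr) ᵥ* (D - Bᴴ * A⁻¹ * B) ⬝ᵥ (x ∘ Sum.inr) := by
      rw [← dotProduct_mulVec]
      exact hS.dotProduct_mulVec_pos hv
    linarith

lemma myQuadBound (P : Matrix p p ℝ) (x : p → ℝ) :
    x ⬝ᵥ P *ᵥ x ≤ (∑ i, ∑ j, |P i j|) * (x ⬝ᵥ x) := by
  have hS : ∀ i, x i * x i ≤ x ⬝ᵥ x := fun i =>
    Finset.single_le_sum (f := fun i => x i * x i) (fun j _ => mul_self_nonneg (x j))
      (Finset.mem_univ i)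
  have h1 : x ⬝ᵥ P *ᵥ x = ∑ i, ∑ j, x i * (P i j * x j) := by
    simp [dotProduct, mulVec, Finset.mul_sum]
  rw [h1, Finset.sum_mul]
  refine Finset.sum_le_sum fun i _ => ?_
  rw [Finset.sum_mul]
  refine Finset.sum_le_sum fun j _ => ?_
  have ha : (0:ℝ) ≤ |P i j| := abs_nonneg _
  have h2 : P i j ≤ |P i j| := le_abs_self _
  have h3 : -|P i j| ≤ P i j := neg_abs_le _
  nlinarith [hS i, hS j, sq_nonneg (x i + x j), sq_nonneg (x i - x j),
    mul_nonneg ha (sq_nonneg (x i + x j)), mul_nonneg ha (sq_nonneg (x i - x j))]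

lemma myDotSelfPos {x : p → ℝ} (hx : x ≠ 0) : 0 < x ⬝ᵥ x := by
  have := Matrix.dotProduct_star_self_pos_iff (v := x) (R := ℝ)
  simpa using this.mpr hx

lemma myPosDefOneSub {P : Matrix p p ℝ} (hP : P.IsHermitian) {c : ℝ}
    (hc : ∑ i, ∑ j, |P i j| < c) : (c • (1 : Matrix p p ℝ) - P).PosDef := by
  refine posDef_iff_dotProduct_mulVec.mpr ⟨?_, fun x hx => ?_⟩
  · show _ = _
    rw [conjTranspose_sub, conjTranspose_smul, star_trivial, conjTranspose_one, hP.eq]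
  · have h1 : (c • (1 : Matrix p p ℝ) - P) *ᵥ x = c • x - P *ᵥ x := by
      rw [sub_mulVec, smul_mulVec, one_mulVec]
    rw [h1, dotProduct_sub, dotProduct_smul]
    have h2 := myQuadBound P x
    have h3 := myDotSelfPos hx
    have h4 : (∑ i, ∑ j, |P i j|) * (x ⬝ᵥ x) < c * (x ⬝ᵥ x) :=
      mul_lt_mul_of_pos_right hc h3
    simp only [star_trivial, smul_eq_mul] at *
    linarith

end Helpers

/-- Positivity of the quadratic part `Ĉ_{A,B}` of the GLE Lyapunov function: for any `A ≥ 0`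
there is `B₀ > 0` such that for all `B ≥ B₀` the block matrix
`[[Iₙ, Iₙ, 0],[Iₙ, B·Iₙ, A·Gᵀ],[0, A·G, B·Q⁻¹]]` is positive definite. -/
theorem stmt11 {n m : ℕ} (hn : 0 < n) (hm : 0 < m) (hnm : n ≤ m)
    (Q : Matrix (Fin m) (Fin m) ℝ) (hQ : Q.PosDef)
    (G : Matrix (Fin m) (Fin n) ℝ) (A : ℝ) (hA : 0 ≤ A) :
    ∃ B₀ : ℝ, 0 < B₀ ∧ ∀ B : ℝ, B₀ ≤ B →
      (Matrix.fromBlocks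
        (Matrix.fromBlocks (1 : Matrix (Fin n) (Fin n) ℝ) (1 : Matrix (Fin n) (Fin n) ℝ)
          (1 : Matrix (Fin n) (Fin n) ℝ) (B • (1 : Matrix (Fin n) (Fin n) ℝ)))
        (Matrix.fromRows (0 : Matrix (Fin n) (Fin m) ℝ) (A • Gᵀ))
        (Matrix.fromCols (0 : Matrix (Fin m) (Fin n) ℝ) (A • G))
        (B • Q⁻¹)).PosDef := by
  classical
  set P : Matrix (Fin n) (Fin n) ℝ := Gᵀ * Q * G with hPdef
  set K : ℝ := ∑ i, ∑ j, |P i j| with hKdef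
  have hK0 : 0 ≤ K := Finset.sum_nonneg fun i _ => Finset.sum_nonneg fun j _ => abs_nonneg _
  refine ⟨A ^ 2 * K + 2, by positivity, fun B hB => ?_⟩
  have hB2 : 2 ≤ B := le_trans (by nlinarith) hB
  have hB0 : (0:ℝ) < B := by linarith
  have hB1 : (1:ℝ) ≤ B := by linarith
  haveI : Invertible B := invertibleOfNonzero hB0.ne'
  -- the (1,2) block and its conjugate transpose
  have hE : (Matrix.fromRows (0 : Matrix (Fin n) (Fin m) ℝ) (A • Gᵀ))ᴴ
      = Matrix.fromCols (0 : Matrix (Fin m) (Fin n) ℝ) (A • G) := by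
    rw [conjTranspose_fromRows_eq_fromCols_conjTranspose, conjTranspose_zero,
      conjTranspose_smul, star_trivial, conjTranspose_eq_transpose_of_trivial,
      transpose_transpose]
  rw [← hE]
  -- D block is positive definite
  have hD : (B • Q⁻¹).PosDef := myPosDef_smul hQ.inv hB0
  refine myPosDef_fromBlocks₂₂ _ _ hD ?_
  -- compute D⁻¹
  have hQdet : IsUnit Q.det := isUnit_iff_isUnit_det Q |>.mp hQ.isUnit
  have hQinvdet : IsUnit (Q⁻¹).det := isUnit_iff_isUnit_det _ |>.mp hQ.inv.isUnit
  have hDinv : (B • Q⁻¹)⁻¹ = B⁻¹ • Q := by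
    rw [Matrix.inv_smul (A := Q⁻¹) B hQinvdet, invOf_eq_inv, Q.nonsing_inv_nonsing_inv hQdet]
  rw [hDinv, hE]
  -- compute the product
  have hprod : (Matrix.fromRows (0 : Matrix (Fin n) (Fin m) ℝ) (A • Gᵀ)) * (B⁻¹ • Q) *
      (Matrix.fromCols (0 : Matrix (Fin m) (Fin n) ℝ) (A • G))
      = fromBlocks 0 0 0 ((A ^ 2 * B⁻¹) • P) := by
    rw [Matrix.fromRows_mul, Matrix.fromRows_mul_fromCols, hPdef]
    simp only [Matrix.zero_mul, Matrix.mul_zero, Matrix.smul_mul, Matrix.mul_smul, smul_smul,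
      Matrix.mul_assoc, smul_zero]
    congr 1
    ring
  rw [hprod]
  have hsub : fromBlocks (1 : Matrix (Fin n) (Fin n) ℝ) 1 1 (B • (1 : Matrix (Fin n) (Fin n) ℝ))
      - fromBlocks 0 0 0 ((A ^ 2 * B⁻¹) • P)
      = fromBlocks 1 1 1 (B • (1 : Matrix (Fin n) (Fin n) ℝ) - (A ^ 2 * B⁻¹) • P) := by
    ext (i | i) (j | j) <;> simp
  rw [hsub]
  have h1H : (1 : Matrix (Fin n) (Fin n) ℝ) = (1 : Matrix (Fin n) (Fin n) ℝ)ᴴ :=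
    conjTranspose_one.symm
  nth_rewrite 3 [h1H]
  refine myPosDef_fromBlocks₁₁ _ _ Matrix.PosDef.one ?_
  have hsimp : B • (1 : Matrix (Fin n) (Fin n) ℝ) - (A ^ 2 * B⁻¹) • P
      - (1 : Matrix (Fin n) (Fin n) ℝ)ᴴ * (1 : Matrix (Fin n) (Fin n) ℝ)⁻¹ * 1
      = (B - 1) • (1 : Matrix (Fin n) (Fin n) ℝ) - (A ^ 2 * B⁻¹) • P := by
    rw [conjTranspose_one, inv_one, Matrix.one_mul, Matrix.mul_one, sub_smul, one_smul,
      sub_right_comm]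
  rw [hsimp]
  -- P is hermitian
  have hGH : Gᴴ = Gᵀ := conjTranspose_eq_transpose_of_trivial G
  have hPH : P.IsHermitian := by
    rw [hPdef, ← hGH]
    exact isHermitian_conjTranspose_mul_mul G hQ.1
  have hcPH : ((A ^ 2 * B⁻¹) • P).IsHermitian := by
    show _ = _
    rw [conjTranspose_smul, star_trivial, hPH.eq]
  refine myPosDefOneSub hcPH ?_
  have hc0 : (0:ℝ) ≤ A ^ 2 * B⁻¹ := by positivity
  have habs : ∑ i, ∑ j, |((A ^ 2 * B⁻¹) • P) i j| = (A ^ 2 * B⁻¹) * K := by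
    rw [hKdef, Finset.mul_sum]
    refine Finset.sum_congr rfl fun i _ => ?_
    rw [Finset.mul_sum]
    refine Finset.sum_congr rfl fun j _ => ?_
    rw [Matrix.smul_apply, smul_eq_mul, abs_mul, abs_of_nonneg hc0]
  rw [habs]
  have hinv1 : B⁻¹ ≤ 1 := by
    rw [inv_le_one_iff₀]
    right; exact hB1
  have hinv0 : (0:ℝ) < B⁻¹ := by positivity
  nlinarith [mul_nonneg (mul_nonneg (sq_nonneg A) hK0) (sub_nonneg.mpr hinv1),
    sq_nonneg A, mul_nonneg (sq_nonneg A) hK0]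
end

section
/- Let n, k be positive integers, E > 0, and let J, M ∈ ℝ^{k×k} and X ∈ ℝ^{k×n} be matrices such that M + Mᵀ is positive definite. Then there exists B₀ > 0 such that for every B ≥ B₀ the symmetric matrix R + Rᵀ is positive definite, where R is the block matrix [[E·Iₙ, 0],[X, J + B·M]] ∈ ℝ^{(n+k)×(n+k)}. -/
open Matrix Finset

-- crude bound: |vᵀAv| ≤ (Σ|Aij|)(v⬝v)
lemma quad_abs_le {k : ℕ} (A : Matrix (Fin k) (Fin k) ℝ) (v : Fin k → ℝ) :
    |v ⬝ᵥ (A *ᵥ v)| ≤ (∑ i, ∑ j, |A i j|) * (v ⬝ᵥ v) := by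
  have hsq : ∀ i, v i * v i ≤ v ⬝ᵥ v := by
    intro i
    exact Finset.single_le_sum (f := fun l => v l * v l)
      (fun l _ => mul_self_nonneg _) (Finset.mem_univ i)
  have hvv : ∀ i j, |v i * v j| ≤ v ⬝ᵥ v := by
    intro i j
    have h1 := hsq i
    have h2 := hsq j
    have h3 : (0:ℝ) ≤ v ⬝ᵥ v := le_trans (mul_self_nonneg (v i)) h1
    rw [abs_mul]
    nlinarith [sq_nonneg (|v i| - |v j|), sq_abs (v i), sq_abs (v j), abs_nonneg (v i), abs_nonneg (v j)]
  have heq : v ⬝ᵥ (A *ᵥ v) = ∑ i, ∑ j, v i * (A i j * v j) := by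
    simp [dotProduct, mulVec, Finset.mul_sum]
  rw [heq]
  calc |∑ i, ∑ j, v i * (A i j * v j)|
      ≤ ∑ i, |∑ j, v i * (A i j * v j)| := Finset.abs_sum_le_sum_abs _ _
    _ ≤ ∑ i, ∑ j, |v i * (A i j * v j)| :=
        Finset.sum_le_sum fun i _ => Finset.abs_sum_le_sum_abs _ _
    _ ≤ ∑ i, ∑ j, |A i j| * (v ⬝ᵥ v) := by
        refine Finset.sum_le_sum fun i _ => Finset.sum_le_sum fun j _ => ?_
        have : |v i * (A i j * v j)| = |A i j| * |v i * v j| := by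
          rw [show v i * (A i j * v j) = A i j * (v i * v j) by ring, abs_mul]
        rw [this]
        exact mul_le_mul_of_nonneg_left (hvv i j) (abs_nonneg _)
    _ = (∑ i, ∑ j, |A i j|) * (v ⬝ᵥ v) := by simp_rw [Finset.sum_mul]

lemma quad_lb {k : ℕ} (A : Matrix (Fin k) (Fin k) ℝ) (v : Fin k → ℝ) :
    -(∑ i, ∑ j, |A i j|) * (v ⬝ᵥ v) ≤ v ⬝ᵥ (A *ᵥ v) := by
  have := quad_abs_le A v
  have := neg_abs_le (v ⬝ᵥ (A *ᵥ v))
  linarith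

lemma quad_ub {k : ℕ} (A : Matrix (Fin k) (Fin k) ℝ) (v : Fin k → ℝ) :
    v ⬝ᵥ (A *ᵥ v) ≤ (∑ i, ∑ j, |A i j|) * (v ⬝ᵥ v) := by
  have := quad_abs_le A v
  have := le_abs_self (v ⬝ᵥ (A *ᵥ v))
  linarith

-- positive definite lower bound via compactness
lemma posdef_quad_lb {k : ℕ} (hk : 0 < k) {P : Matrix (Fin k) (Fin k) ℝ} (hP : P.PosDef) :
    ∃ c : ℝ, 0 < c ∧ ∀ v : Fin k → ℝ, c * (v ⬝ᵥ v) ≤ v ⬝ᵥ (P *ᵥ v) := by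
  set f : EuclideanSpace ℝ (Fin k) → ℝ :=
    fun v => (WithLp.equiv 2 (Fin k → ℝ) v) ⬝ᵥ (P *ᵥ (WithLp.equiv 2 (Fin k → ℝ) v)) with hf
  have hcont : Continuous f := by
    have h1 : Continuous fun v : Fin k → ℝ => v ⬝ᵥ (P *ᵥ v) := by
      simp only [dotProduct, mulVec]
      exact continuous_finset_sum _ fun i _ => (continuous_apply i).mul
        (continuous_finset_sum _ fun j _ => continuous_const.mul (continuous_apply j))
    exact h1.comp (PiLp.continuous_ofLp 2 (fun _ : Fin k => ℝ))
  have hnormsq : ∀ v : EuclideanSpace ℝ (Fin k),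
      (WithLp.equiv 2 (Fin k → ℝ) v) ⬝ᵥ (WithLp.equiv 2 (Fin k → ℝ) v) = ‖v‖ ^ 2 := by
    intro v
    rw [EuclideanSpace.norm_eq]
    rw [Real.sq_sqrt (by positivity)]
    simp [dotProduct, sq]
  have hne : (Metric.sphere (0 : EuclideanSpace ℝ (Fin k)) 1).Nonempty := by
    refine ⟨EuclideanSpace.single ⟨0, hk⟩ (1:ℝ), ?_⟩
    simp [EuclideanSpace.norm_single]
  obtain ⟨v0, hv0s, hmin⟩ := (isCompact_sphere (0 : EuclideanSpace ℝ (Fin k)) 1).exists_isMinOn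
    hne hcont.continuousOn
  have hv0norm : ‖v0‖ = 1 := by simpa using mem_sphere_zero_iff_norm.mp hv0s
  have hv0ne : (WithLp.equiv 2 (Fin k → ℝ) v0) ≠ 0 := by
    intro h
    have : v0 = 0 := by
      ext i; exact congrFun h i
    rw [this] at hv0norm; simp at hv0norm
  have hc : 0 < f v0 := by
    have := hP.dotProduct_mulVec_pos hv0ne
    simpa [hf] using this
  refine ⟨f v0, hc, fun v => ?_⟩
  by_cases hv : v = 0
  · simp [hv]
  · set w : EuclideanSpace ℝ (Fin k) := (WithLp.equiv 2 (Fin k → ℝ)).symm v with hw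
    have hwne : w ≠ 0 := by
      intro h
      apply hv
      ext i
      exact congrFun (congrArg (WithLp.equiv 2 (Fin k → ℝ)) h) i
    set r : ℝ := ‖w‖ with hr
    have hrpos : 0 < r := norm_pos_iff.mpr hwne
    have hsph : r⁻¹ • w ∈ Metric.sphere (0 : EuclideanSpace ℝ (Fin k)) 1 := by
      simp [norm_smul, abs_of_pos (inv_pos.mpr hrpos), hr, inv_mul_cancel₀ hrpos.ne', inv_mul_cancel₀ (norm_pos_iff.mpr hwne).ne']
    have hkey := isMinOn_iff.mp hmin _ hsph
    have hfscale : f (r⁻¹ • w) = r⁻¹ * (r⁻¹ * f w) := by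
      simp only [hf, WithLp.equiv_apply, WithLp.ofLp_smul, smul_dotProduct, dotProduct_smul, mulVec_smul,
        smul_eq_mul]
      try ring
    have hfw : f w = v ⬝ᵥ (P *ᵥ v) := by
      simp only [hf, hw, Equiv.apply_symm_apply]
    have hvv : v ⬝ᵥ v = r ^ 2 := by
      have := hnormsq w
      rw [hw, Equiv.apply_symm_apply] at this
      rw [this]
    have hq : f v0 ≤ r⁻¹ * (r⁻¹ * f w) := by rw [← hfscale]; exact hkey
    have hfw2 : f w = r * (r * (f (r⁻¹ • w))) := by
      rw [hfscale]
      field_simp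
    rw [← hfw, hvv, hfw2]
    nlinarith [hkey, hrpos]

/-- If `M + Mᵀ` is positive definite, then for `B` large enough the symmetric part of the
block matrix `R = [[E·Iₙ, 0],[X, J + B·M]]` is positive definite. -/
theorem stmt12 {n k : ℕ} (hn : 0 < n) (hk : 0 < k) (E : ℝ) (hE : 0 < E)
    (J M : Matrix (Fin k) (Fin k) ℝ) (X : Matrix (Fin k) (Fin n) ℝ)
    (hM : (M + Mᵀ).PosDef) :
    ∃ B₀ : ℝ, 0 < B₀ ∧ ∀ B : ℝ, B₀ ≤ B →
      ((Matrix.fromBlocks (E • (1 : Matrix (Fin n) (Fin n) ℝ)) (0 : Matrix (Fin n) (Fin k) ℝ)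
          X (J + B • M))
        + (Matrix.fromBlocks (E • (1 : Matrix (Fin n) (Fin n) ℝ)) (0 : Matrix (Fin n) (Fin k) ℝ)
          X (J + B • M))ᵀ).PosDef := by
  obtain ⟨c, hc, hP⟩ := posdef_quad_lb hk hM
  set P := M + Mᵀ with hPdef
  set Cm := J + Jᵀ with hCm
  set m : ℝ := ∑ i, ∑ j, |Cm i j| with hm
  set L : ℝ := ∑ i : Fin n, ∑ j : Fin n, |(Xᵀ * X) i j| with hL
  have hXu : ∀ u : Fin n → ℝ, (X *ᵥ u) ⬝ᵥ (X *ᵥ u) ≤ L * (u ⬝ᵥ u) := by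
    intro u
    have h1 : u ⬝ᵥ ((Xᵀ * X) *ᵥ u) = (X *ᵥ u) ⬝ᵥ (X *ᵥ u) := by
      rw [← mulVec_mulVec, dotProduct_mulVec, vecMul_transpose]
    rw [← h1]
    exact quad_ub _ u
  have hmnn : 0 ≤ m := Finset.sum_nonneg fun i _ => Finset.sum_nonneg fun j _ => abs_nonneg _
  have hLnn : 0 ≤ L := Finset.sum_nonneg fun i _ => Finset.sum_nonneg fun j _ => abs_nonneg _
  set ε : ℝ := (L + 1) / E with hε
  have hεpos : 0 < ε := div_pos (by linarith) hE
  refine ⟨max 1 ((1 + m + ε) / c), lt_max_of_lt_left one_pos, fun B hB => ?_⟩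
  have hB0 : 0 ≤ B := le_trans (le_trans zero_le_one (le_max_left _ _)) hB
  have hBc : 1 + m + ε ≤ B * c := by
    have h1 : (1 + m + ε) / c ≤ B := le_trans (le_max_right _ _) hB
    calc 1 + m + ε = ((1 + m + ε) / c) * c := by field_simp
      _ ≤ B * c := mul_le_mul_of_nonneg_right h1 hc.le
  -- rewrite the matrix
  have hmat : ((Matrix.fromBlocks (E • (1 : Matrix (Fin n) (Fin n) ℝ)) (0 : Matrix (Fin n) (Fin k) ℝ)
          X (J + B • M))
        + (Matrix.fromBlocks (E • (1 : Matrix (Fin n) (Fin n) ℝ)) (0 : Matrix (Fin n) (Fin k) ℝ)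
          X (J + B • M))ᵀ)
      = Matrix.fromBlocks (E • 1 + E • 1) Xᵀ X (Cm + B • P) := by
    rw [fromBlocks_transpose, fromBlocks_add, Matrix.fromBlocks_inj]
    refine ⟨by rw [transpose_smul, transpose_one], by rw [zero_add], by simp, ?_⟩
    rw [transpose_add, transpose_smul, hCm, hPdef, smul_add]
    abel
  rw [hmat]
  rw [Matrix.posDef_iff_dotProduct_mulVec]
  constructor
  · -- Hermitian
    rw [← hmat]
    have h1 : ((Matrix.fromBlocks (E • (1 : Matrix (Fin n) (Fin n) ℝ)) (0 : Matrix (Fin n) (Fin k) ℝ)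
          X (J + B • M)))ᵀ
        = ((Matrix.fromBlocks (E • (1 : Matrix (Fin n) (Fin n) ℝ)) (0 : Matrix (Fin n) (Fin k) ℝ)
          X (J + B • M)))ᴴ := by
      rw [conjTranspose_eq_transpose_of_trivial]
    rw [h1]
    exact isHermitian_add_transpose_self _
  · intro x hx
    set u : Fin n → ℝ := x ∘ Sum.inl with hu
    set v : Fin k → ℝ := x ∘ Sum.inr with hv
    have hxel : x = Sum.elim u v := by
      ext i; cases i <;> rfl
    have hstar : star x = x := by
      ext i; simp
    rw [hstar, hxel, fromBlocks_mulVec]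
    have huu : (Sum.elim u v) ∘ Sum.inl = u := rfl
    have hvv : (Sum.elim u v) ∘ Sum.inr = v := rfl
    rw [huu, hvv, sumElim_dotProduct_sumElim]
    -- expand
    have e1 : u ⬝ᵥ ((E • 1 + E • 1) *ᵥ u + Xᵀ *ᵥ v)
        = 2 * E * (u ⬝ᵥ u) + u ⬝ᵥ (Xᵀ *ᵥ v) := by
      rw [dotProduct_add, add_mulVec, dotProduct_add]
      have : u ⬝ᵥ ((E • (1 : Matrix (Fin n) (Fin n) ℝ)) *ᵥ u) = E * (u ⬝ᵥ u) := by
        rw [smul_mulVec, dotProduct_smul, one_mulVec, smul_eq_mul]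
      rw [this]; ring
    have e2 : v ⬝ᵥ (X *ᵥ u + (Cm + B • P) *ᵥ v)
        = v ⬝ᵥ (X *ᵥ u) + v ⬝ᵥ (Cm *ᵥ v) + B * (v ⬝ᵥ (P *ᵥ v)) := by
      rw [dotProduct_add, add_mulVec, dotProduct_add, smul_mulVec, dotProduct_smul,
        smul_eq_mul]
      try ring
    rw [e1, e2]
    have ecross : u ⬝ᵥ (Xᵀ *ᵥ v) = v ⬝ᵥ (X *ᵥ u) := by
      rw [mulVec_transpose, dotProduct_mulVec, dotProduct_comm]
    rw [ecross]
    -- Young's inequality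
    have h0 : 0 ≤ (ε • v + X *ᵥ u) ⬝ᵥ (ε • v + X *ᵥ u) :=
      Finset.sum_nonneg fun i _ => mul_self_nonneg _
    have hexp : (ε • v + X *ᵥ u) ⬝ᵥ (ε • v + X *ᵥ u)
        = ε * ε * (v ⬝ᵥ v) + 2 * ε * (v ⬝ᵥ (X *ᵥ u)) + (X *ᵥ u) ⬝ᵥ (X *ᵥ u) := by
      simp only [dotProduct_add, add_dotProduct, smul_dotProduct, dotProduct_smul,
        smul_eq_mul, dotProduct_comm (X *ᵥ u) v]
      ring
    rw [hexp] at h0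
    have hg : -m * (v ⬝ᵥ v) ≤ v ⬝ᵥ (Cm *ᵥ v) := by
      have := quad_lb Cm v
      linarith [this]
    have hfP : c * (v ⬝ᵥ v) ≤ v ⬝ᵥ (P *ᵥ v) := hP v
    have huun : 0 ≤ u ⬝ᵥ u := Finset.sum_nonneg fun i _ => mul_self_nonneg _
    have hvvn : 0 ≤ v ⬝ᵥ v := Finset.sum_nonneg fun i _ => mul_self_nonneg _
    have hQ : (X *ᵥ u) ⬝ᵥ (X *ᵥ u) ≤ L * (u ⬝ᵥ u) := hXu u
    have hpos : 0 < u ⬝ᵥ u ∨ 0 < v ⬝ᵥ v := by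
      by_contra h
      push_neg at h
      apply hx
      have hu1 : u = 0 := dotProduct_self_eq_zero.mp (le_antisymm h.1 huun)
      have hv1 : v = 0 := dotProduct_self_eq_zero.mp (le_antisymm h.2 hvvn)
      rw [hxel, hu1, hv1]
      ext i; cases i <;> rfl
    have hεE : ε * E = L + 1 := by
      rw [hε]; field_simp
    have t1 : ε * (2 * E * (u ⬝ᵥ u)) = 2 * (L + 1) * (u ⬝ᵥ u) := by
      calc ε * (2 * E * (u ⬝ᵥ u)) = 2 * (ε * E) * (u ⬝ᵥ u) := by ring
        _ = 2 * (L + 1) * (u ⬝ᵥ u) := by rw [hεE]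
    have t3 : ε * (-m * (v ⬝ᵥ v)) ≤ ε * (v ⬝ᵥ (Cm *ᵥ v)) :=
      mul_le_mul_of_nonneg_left hg hεpos.le
    have t4 : B * (c * (v ⬝ᵥ v)) ≤ B * (v ⬝ᵥ (P *ᵥ v)) :=
      mul_le_mul_of_nonneg_left hfP hB0
    have t4' : ε * (B * (c * (v ⬝ᵥ v))) ≤ ε * (B * (v ⬝ᵥ (P *ᵥ v))) :=
      mul_le_mul_of_nonneg_left t4 hεpos.le
    have hεV : 0 ≤ ε * (v ⬝ᵥ v) := mul_nonneg hεpos.le hvvn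
    have t5 : (ε * (v ⬝ᵥ v)) * (1 + m + ε) ≤ (ε * (v ⬝ᵥ v)) * (B * c) :=
      mul_le_mul_of_nonneg_left hBc hεV
    have hLU : 0 ≤ L * (u ⬝ᵥ u) := mul_nonneg hLnn huun
    have hsum : ε * (2 * E * (u ⬝ᵥ u) + 2 * (v ⬝ᵥ (X *ᵥ u)) + v ⬝ᵥ (Cm *ᵥ v)
          + B * (v ⬝ᵥ (P *ᵥ v)))
        = ε * (2 * E * (u ⬝ᵥ u)) + 2 * ε * (v ⬝ᵥ (X *ᵥ u)) + ε * (v ⬝ᵥ (Cm *ᵥ v))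
          + ε * (B * (v ⬝ᵥ (P *ᵥ v))) := by ring
    have h2C : -(ε * ε * (v ⬝ᵥ v)) - L * (u ⬝ᵥ u) ≤ 2 * ε * (v ⬝ᵥ (X *ᵥ u)) := by
      linarith [h0, hQ]
    have key : 0 < ε * (2 * E * (u ⬝ᵥ u) + 2 * (v ⬝ᵥ (X *ᵥ u)) + v ⬝ᵥ (Cm *ᵥ v)
        + B * (v ⬝ᵥ (P *ᵥ v))) := by
      rcases hpos with h | h
      · rw [hsum]; linarith [t1, h2C, t3, t4', t5, hLU, hεV, h]
      · rw [hsum]; linarith [t1, h2C, t3, t4', t5, hLU, huun, mul_pos hεpos h]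
    by_contra hcon
    push_neg at hcon
    have : ε * (2 * E * (u ⬝ᵥ u) + 2 * (v ⬝ᵥ (X *ᵥ u)) + v ⬝ᵥ (Cm *ᵥ v)
        + B * (v ⬝ᵥ (P *ᵥ v))) ≤ 0 := mul_nonpos_of_nonneg_of_nonpos hεpos.le (by linarith)
    linarith
end
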